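/- arXiv:2002.04550 — 8 statements merged into one kernel-verified Lean document; each statement's English description precedes it below -/
import Mathlib

section
/- For every real n×n matrix A there exists a real orthogonal n×n matrix Q such that Qᵀ A Q is quasi-upper-triangular. -/
open Matrix

/-- A real `n × n` matrix `T` is quasi-upper-triangular if `T i j = 0` whenever
`(i : ℕ) > (j : ℕ) + 1`, and there is no index `i` such that both subdiagonal
entries `T (i+1) i` and `T (i+2) (i+1)` are nonzero. -/
def QuasiUpperTriangular {n : ℕ} (T : Matrix (Fin n) (Fin n) ℝ) : Prop :=
  (∀ i j : Fin n, (j : ℕ) + 1 < (i : ℕ) → T i j = 0) ∧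
  ¬ ∃ (i : ℕ) (h1 : i + 1 < n) (h2 : i + 2 < n),
      T ⟨i + 1, h1⟩ ⟨i, Nat.lt_of_succ_lt h1⟩ ≠ 0 ∧ T ⟨i + 2, h2⟩ ⟨i + 1, h1⟩ ≠ 0

open Polynomial Module in
lemma exists_inv_vec {E : Type*} [AddCommGroup E] [Module ℝ E] [FiniteDimensional ℝ E]
    [Nontrivial E] (f : Module.End ℝ E) :
    ∃ v : E, v ≠ 0 ∧ f (f v) ∈ Submodule.span ℝ {v, f v} := by
  have hint : IsIntegral ℝ f := Algebra.IsIntegral.isIntegral (R := ℝ) f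
  have hp0 : minpoly ℝ f ≠ 0 := minpoly.ne_zero hint
  have hpu : ¬ IsUnit (minpoly ℝ f) := minpoly.not_isUnit ℝ f
  obtain ⟨q, hqirr, hqdvd⟩ := WfDvdMonoid.exists_irreducible_factor hpu hp0
  have hker : LinearMap.ker (Polynomial.aeval f q) ≠ ⊥ := by
    intro hbot
    obtain ⟨r, hr⟩ := hqdvd
    have hu : IsUnit (Polynomial.aeval f q : Module.End ℝ E) :=
      (LinearMap.isUnit_iff_ker_eq_bot _).2 hbot
    have hr0 : r ≠ 0 := by rintro rfl; simp at hr; exact hp0 hr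
    have haevr : Polynomial.aeval f r = 0 := by
      have h0 : Polynomial.aeval f (minpoly ℝ f) = 0 := minpoly.aeval ℝ f
      rw [hr, _root_.map_mul] at h0
      obtain ⟨u, hu'⟩ := hu
      calc Polynomial.aeval f r = (↑u⁻¹ * u : Module.End ℝ E) * Polynomial.aeval f r := by
            simp
        _ = ↑u⁻¹ * (Polynomial.aeval f q * Polynomial.aeval f r) := by rw [hu', mul_assoc]
        _ = 0 := by rw [h0, mul_zero]
    have hdvd2 := minpoly.degree_le_of_ne_zero ℝ f hr0 haevr
    have hq1 : 1 ≤ q.natDegree := Polynomial.natDegree_pos_iff_degree_pos.2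
      (Polynomial.degree_pos_of_irreducible hqirr)
    have hmul : (minpoly ℝ f).natDegree = q.natDegree + r.natDegree := by
      rw [hr, Polynomial.natDegree_mul (fun h => hp0 (by simp [hr, h])) hr0]
    have hle : (minpoly ℝ f).natDegree ≤ r.natDegree :=
      Polynomial.natDegree_le_natDegree hdvd2
    omega
  obtain ⟨v, hv, hv0⟩ := Submodule.exists_mem_ne_zero_of_ne_bot hker
  refine ⟨v, hv0, ?_⟩
  have hdeg : q.natDegree ≤ 2 := hqirr.natDegree_le_two
  have hq1 : 1 ≤ q.natDegree := Polynomial.natDegree_pos_iff_degree_pos.2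
      (Polynomial.degree_pos_of_irreducible hqirr)
  have hlc : q.coeff q.natDegree ≠ 0 := by
    rw [Polynomial.coeff_natDegree]
    exact Polynomial.leadingCoeff_ne_zero.2 hqirr.ne_zero
  have hqv : Polynomial.aeval f q v = 0 := hv
  rw [Polynomial.aeval_eq_sum_range] at hqv
  interval_cases hd : q.natDegree
  · simp only [Finset.sum_range_succ, Finset.sum_range_zero, zero_add, pow_zero, pow_one,
      Module.End.one_apply] at hqv
    have h2 : q.coeff 1 • f v = -(q.coeff 0 • v) := eq_neg_of_add_eq_zero_right hqv
    have hfv : f v = ((q.coeff 1)⁻¹ * (-q.coeff 0)) • v := by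
      calc f v = (q.coeff 1)⁻¹ • (q.coeff 1 • f v) := by
            rw [smul_smul, inv_mul_cancel₀ hlc, one_smul]
        _ = (q.coeff 1)⁻¹ • (-(q.coeff 0 • v)) := by rw [h2]
        _ = _ := by module
    have key : f (f v) = ((q.coeff 1)⁻¹ * (-q.coeff 0)) • f v :=
      (congrArg f hfv).trans (map_smul f _ _)
    rw [key]
    exact Submodule.smul_mem _ _ (Submodule.subset_span (by simp))
  · simp only [Finset.sum_range_succ, Finset.sum_range_zero, zero_add, pow_zero, pow_one,
      Module.End.one_apply, pow_succ, Module.End.mul_apply] at hqv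
    have h2 : q.coeff 2 • f (f v) = -(q.coeff 0 • v + q.coeff 1 • f v) :=
      eq_neg_of_add_eq_zero_right hqv
    have key : f (f v) = ((q.coeff 2)⁻¹ * (-q.coeff 0)) • v
        + ((q.coeff 2)⁻¹ * (-q.coeff 1)) • f v := by
      calc f (f v) = (q.coeff 2)⁻¹ • (q.coeff 2 • f (f v)) := by
            rw [smul_smul, inv_mul_cancel₀ hlc, one_smul]
        _ = (q.coeff 2)⁻¹ • (-(q.coeff 0 • v + q.coeff 1 • f v)) := by rw [h2]
        _ = _ := by module
    rw [key]
    exact Submodule.add_mem _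
      (Submodule.smul_mem _ _ (Submodule.subset_span (by simp)))
      (Submodule.smul_mem _ _ (Submodule.subset_span (by simp)))


local notation "⟪" x ", " y "⟫" => inner (𝕜 := ℝ) x y

open Module in
lemma exists_orth_family {E : Type*} [NormedAddCommGroup E] [InnerProductSpace ℝ E]
    [FiniteDimensional ℝ E] [Nontrivial E] (f : Module.End ℝ E) :
    ∃ (k : ℕ), 1 ≤ k ∧ k ≤ 2 ∧ ∃ u : Fin k → E, Orthonormal ℝ u ∧
      ∀ j, f (u j) ∈ Submodule.span ℝ (Set.range u) := by
  obtain ⟨v, hv0, hffv⟩ := exists_inv_vec f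
  have hnv : ‖v‖ ≠ 0 := norm_ne_zero_iff.2 hv0
  set u₀ : E := ‖v‖⁻¹ • v with hu₀
  have hu₀norm : ‖u₀‖ = 1 := norm_smul_inv_norm hv0
  have hu₀inner : ⟪u₀, u₀⟫ = 1 := by
    rw [real_inner_self_eq_norm_sq, hu₀norm]; norm_num
  set c : ℝ := ⟪u₀, f v⟫ with hc
  set w : E := f v - c • u₀ with hw
  have hvW : v = ‖v‖ • u₀ := by rw [hu₀, smul_smul, mul_inv_cancel₀ hnv, one_smul]
  have hfv : f v = w + c • u₀ := by rw [hw]; abel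
  by_cases hw0 : w = 0
  · -- k = 1
    refine ⟨1, le_refl 1, by norm_num, ![u₀], ?_, ?_⟩
    · rw [orthonormal_iff_ite]
      intro i j
      fin_cases i; fin_cases j
      simpa using hu₀inner
    · intro j
      have hfu₀ : f u₀ = (‖v‖⁻¹ * c) • u₀ := by
        rw [hu₀, _root_.map_smul, hfv, hw0, zero_add, smul_smul]
      fin_cases j
      show f u₀ ∈ _
      rw [hfu₀]
      exact Submodule.smul_mem _ _ (Submodule.subset_span (by simp))
  · -- k = 2
    have hnw : ‖w‖ ≠ 0 := norm_ne_zero_iff.2 hw0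
    set u₁ : E := ‖w‖⁻¹ • w with hu₁
    have hu₁norm : ‖u₁‖ = 1 := norm_smul_inv_norm hw0
    have hu₁inner : ⟪u₁, u₁⟫ = 1 := by
      rw [real_inner_self_eq_norm_sq, hu₁norm]; norm_num
    have horth : ⟪u₀, u₁⟫ = 0 := by
      rw [hu₁, real_inner_smul_right, hw, inner_sub_right, real_inner_smul_right,
        hu₀inner, ← hc]
      ring
    have horth' : ⟪u₁, u₀⟫ = 0 := by rw [real_inner_comm]; exact horth
    -- span equality
    have hsub1 : Submodule.span ℝ {v, f v} ≤ Submodule.span ℝ {u₀, u₁} := by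
      rw [Submodule.span_le]
      rintro x (rfl | rfl)
      · rw [hvW]
        exact Submodule.smul_mem _ _ (Submodule.subset_span (by simp))
      · show f v ∈ _
        have hwu : w = ‖w‖ • u₁ := by rw [hu₁, smul_smul, mul_inv_cancel₀ hnw, one_smul]
        rw [hfv, hwu]
        exact Submodule.add_mem _
          (Submodule.smul_mem _ _ (Submodule.subset_span (by simp)))
          (Submodule.smul_mem _ _ (Submodule.subset_span (by simp)))
    have hu₀W : u₀ ∈ Submodule.span ℝ {v, f v} := by
      rw [hu₀]
      exact Submodule.smul_mem _ _ (Submodule.subset_span (by simp))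
    have hfvW : f v ∈ Submodule.span ℝ {v, f v} := Submodule.subset_span (by simp)
    have hu₁W : u₁ ∈ Submodule.span ℝ {v, f v} := by
      rw [hu₁, hw]
      exact Submodule.smul_mem _ _ (Submodule.sub_mem _ hfvW (Submodule.smul_mem _ _ hu₀W))
    refine ⟨2, by norm_num, le_refl 2, ![u₀, u₁], ?_, ?_⟩
    · rw [orthonormal_iff_ite]
      intro i j
      fin_cases i <;> fin_cases j <;>
        simp [Fin.ext_iff, hu₀inner, hu₁inner, horth, horth', hu₀norm, hu₁norm]
    · have hrange : Submodule.span ℝ {v, f v} ≤ Submodule.span ℝ (Set.range ![u₀, u₁]) := by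
        refine le_trans hsub1 (Submodule.span_mono ?_)
        intro x hx
        rcases hx with rfl | rfl
        · exact ⟨0, rfl⟩
        · exact ⟨1, rfl⟩
      intro j
      have hfu₀ : f u₀ ∈ Submodule.span ℝ {v, f v} := by
        rw [hu₀, _root_.map_smul]
        exact Submodule.smul_mem _ _ hfvW
      have hfu₁ : f u₁ ∈ Submodule.span ℝ {v, f v} := by
        rw [hu₁, _root_.map_smul, hw, _root_.map_sub, _root_.map_smul]
        refine Submodule.smul_mem _ _ (Submodule.sub_mem _ hffv (Submodule.smul_mem _ _ hfu₀))
      fin_cases j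
      · exact hrange hfu₀
      · exact hrange hfu₁


open Module in
lemma exists_block_reduce (n : ℕ) (hn : 0 < n) (A : Matrix (Fin n) (Fin n) ℝ) :
    ∃ k, 1 ≤ k ∧ k ≤ 2 ∧ k ≤ n ∧ ∃ Q : Matrix (Fin n) (Fin n) ℝ, Qᵀ * Q = 1 ∧
      ∀ i j : Fin n, (j : ℕ) < k → k ≤ (i : ℕ) → (Qᵀ * A * Q) i j = 0 := by
  haveI : Nonempty (Fin n) := Fin.pos_iff_nonempty.mp hn
  haveI hnt : Nontrivial (EuclideanSpace ℝ (Fin n)) := by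
    refine ⟨EuclideanSpace.single (Classical.arbitrary (Fin n)) 1, 0, fun h => ?_⟩
    have := congrArg (fun x => x (Classical.arbitrary (Fin n))) h
    simp [EuclideanSpace.single_apply] at this
  have hinner : ∀ x y : EuclideanSpace ℝ (Fin n), ⟪x, y⟫ = ∑ i, x i * y i := by
    intro x y
    simp [PiLp.inner_apply, RCLike.inner_apply, mul_comm]
  set f : Module.End ℝ (EuclideanSpace ℝ (Fin n)) :=
    (WithLp.linearEquiv 2 ℝ (Fin n → ℝ)).symm.toLinearMap ∘ₗ A.mulVecLin ∘ₗ
      (WithLp.linearEquiv 2 ℝ (Fin n → ℝ)).toLinearMap with hf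
  have hfapp : ∀ (x : EuclideanSpace ℝ (Fin n)) (i : Fin n), f x i = ∑ y, A i y * x y := fun _ _ => rfl
  obtain ⟨k, hk1, hk2, u, hu, hinvar⟩ := exists_orth_family f
  have hkn : k ≤ n := by
    have := hu.linearIndependent.fintype_card_le_finrank
    simpa [finrank_euclideanSpace_fin] using this
  set s : Set (Fin n) := {i | (i : ℕ) < k} with hs
  set g : Fin n → EuclideanSpace ℝ (Fin n) := fun i => if h : (i : ℕ) < k then u ⟨i, h⟩ else 0 with hg
  have hrestrict : Orthonormal ℝ (s.restrict g) := by
    have heq : s.restrict g = u ∘ (fun i : s => (⟨(i : Fin n), i.2⟩ : Fin k)) := by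
      funext i
      simp only [Set.restrict_apply, Function.comp_apply, hg]
      exact dif_pos i.2
    rw [heq]
    exact hu.comp _ (fun a b hab => by
      apply Subtype.ext; apply Fin.ext
      simpa [Fin.ext_iff] using hab)
  obtain ⟨b, hb⟩ := hrestrict.exists_orthonormalBasis_extension_of_card_eq
    (by rw [finrank_euclideanSpace_fin]; simp)
  have hbu : ∀ (i : Fin n) (hi : (i : ℕ) < k), b i = u ⟨i, hi⟩ := by
    intro i hi
    rw [hb i hi]
    simp only [hg]
    exact dif_pos hi
  have hbo := orthonormal_iff_ite.mp b.orthonormal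
  refine ⟨k, hk1, hk2, hkn, Matrix.of (fun i j => b j i), ?_, ?_⟩
  · ext i j
    rw [Matrix.mul_apply, Matrix.one_apply]
    have heq2 : ∑ x, (Matrix.of (fun i j => b j i))ᵀ i x * Matrix.of (fun i j => b j i) x j
        = ⟪(b i : EuclideanSpace ℝ (Fin n)), (b j : EuclideanSpace ℝ (Fin n))⟫ := by
      rw [hinner]
      simp [Matrix.transpose_apply]
    rw [heq2, hbo]
  · intro i j hj hi
    have hentry : ((Matrix.of fun i j => b j i)ᵀ * A * Matrix.of fun i j => b j i) i j
        = ⟪(b i : EuclideanSpace ℝ (Fin n)), f (b j)⟫ := by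
      rw [hinner]
      simp only [Matrix.mul_apply, Matrix.transpose_apply, Matrix.of_apply, hfapp,
        Finset.sum_mul, Finset.mul_sum]
      rw [Finset.sum_comm]
      exact Finset.sum_congr rfl fun x _ => Finset.sum_congr rfl fun y _ => by ring
    rw [hentry]
    have hmem : f (b j) ∈ Submodule.span ℝ (Set.range u) := by
      rw [hbu j hj]; exact hinvar _
    have hzero : ∀ y ∈ Submodule.span ℝ (Set.range u), ⟪(b i : EuclideanSpace ℝ (Fin n)), y⟫ = 0 := by
      intro y hy
      induction hy using Submodule.span_induction with
      | mem x hx =>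
          obtain ⟨m, rfl⟩ := hx
          have hmlt : (m : ℕ) < n := lt_of_lt_of_le m.2 hkn
          have hm : ((⟨(m : ℕ), hmlt⟩ : Fin n) : ℕ) < k := m.2
          have hum : u m = b ⟨(m : ℕ), hmlt⟩ := by rw [hbu _ hm]
          rw [hum, hbo]
          have hne : i ≠ (⟨(m : ℕ), hmlt⟩ : Fin n) := by
            intro h
            have := congrArg Fin.val h
            simp only at this
            omega
          simp [hne]
      | zero => simp
      | add x y _ _ hx hy => rw [inner_add_right, hx, hy, add_zero]
      | smul c x _ hx => rw [real_inner_smul_right, hx, mul_zero]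
    exact hzero _ hmem


/-- Real Schur decomposition: every real square matrix is orthogonally similar to a
quasi-upper-triangular matrix. -/
theorem real_schur_decomposition (n : ℕ) (A : Matrix (Fin n) (Fin n) ℝ) :
    ∃ Q : Matrix (Fin n) (Fin n) ℝ, Qᵀ * Q = 1 ∧ QuasiUpperTriangular (Qᵀ * A * Q) := by
  induction n using Nat.strong_induction_on with
  | _ n ih =>
  rcases Nat.eq_zero_or_pos n with rfl | hn
  · exact ⟨1, by simp, fun i _ _ => i.elim0, by rintro ⟨i, h1, -⟩; omega⟩
  obtain ⟨k, hk1, hk2, hkn, Q₀, hQ₀, hzero⟩ := exists_block_reduce n hn A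
  set m := n - k with hm
  have hkm : k + m = n := by omega
  have hmn : m < n := by omega
  set M := Q₀ᵀ * A * Q₀ with hM
  set eqv : Fin k ⊕ Fin m ≃ Fin n := finSumFinEquiv.trans (finCongr hkm) with heqv
  have hval_l : ∀ x : Fin k, ((eqv (Sum.inl x)) : ℕ) = (x : ℕ) := by
    intro x; simp [heqv]
  have hval_r : ∀ x : Fin m, ((eqv (Sum.inr x)) : ℕ) = k + (x : ℕ) := by
    intro x; simp [heqv]
  have hsymm_lt : ∀ (i : Fin n) (hi : (i : ℕ) < k), eqv.symm i = Sum.inl ⟨i, hi⟩ := by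
    intro i hi
    apply eqv.injective
    rw [Equiv.apply_symm_apply]
    apply Fin.ext
    rw [hval_l]
  have hsymm_ge : ∀ (i : Fin n) (hi : k ≤ (i : ℕ)),
      eqv.symm i = Sum.inr ⟨(i : ℕ) - k, by omega⟩ := by
    intro i hi
    apply eqv.injective
    rw [Equiv.apply_symm_apply]
    apply Fin.ext
    rw [hval_r]
    show (i : ℕ) = k + ((i : ℕ) - k)
    omega
  set B : Matrix (Fin k) (Fin k) ℝ :=
    Matrix.of fun i j => M (eqv (Sum.inl i)) (eqv (Sum.inl j)) with hB
  set C : Matrix (Fin k) (Fin m) ℝ :=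
    Matrix.of fun i j => M (eqv (Sum.inl i)) (eqv (Sum.inr j)) with hC
  set D : Matrix (Fin m) (Fin m) ℝ :=
    Matrix.of fun i j => M (eqv (Sum.inr i)) (eqv (Sum.inr j)) with hD
  have hMblock : M = (fromBlocks B C 0 D).submatrix eqv.symm eqv.symm := by
    ext i j
    obtain ⟨p, rfl⟩ := eqv.surjective i
    obtain ⟨q, rfl⟩ := eqv.surjective j
    rw [submatrix_apply, Equiv.symm_apply_apply, Equiv.symm_apply_apply]
    cases p with
    | inl p => cases q with
      | inl q => rfl
      | inr q => rfl
    | inr p => cases q with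
      | inl q =>
          show M _ _ = (0 : Matrix (Fin m) (Fin k) ℝ) p q
          rw [Matrix.zero_apply]
          exact hzero _ _ (by rw [hval_l]; exact q.2) (by rw [hval_r]; omega)
      | inr q => rfl
  obtain ⟨Q₁, hQ₁, hDq⟩ := ih m hmn D
  set Q₂ : Matrix (Fin n) (Fin n) ℝ :=
    (fromBlocks (1 : Matrix (Fin k) (Fin k) ℝ) 0 0 Q₁).submatrix eqv.symm eqv.symm with hQ₂
  have hQ₂orth : Q₂ᵀ * Q₂ = 1 := by
    rw [hQ₂, transpose_submatrix, submatrix_mul_equiv, fromBlocks_transpose,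
      fromBlocks_multiply]
    simp [hQ₁]
  refine ⟨Q₀ * Q₂, ?_, ?_⟩
  · rw [transpose_mul, Matrix.mul_assoc, ← Matrix.mul_assoc Q₀ᵀ, hQ₀, Matrix.one_mul, hQ₂orth]
  have hT : (Q₀ * Q₂)ᵀ * A * (Q₀ * Q₂)
      = (fromBlocks B (C * Q₁) 0 (Q₁ᵀ * D * Q₁)).submatrix eqv.symm eqv.symm := by
    have h1 : (Q₀ * Q₂)ᵀ * A * (Q₀ * Q₂) = Q₂ᵀ * M * Q₂ := by
      rw [hM, transpose_mul]
      simp only [Matrix.mul_assoc]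
    rw [h1, hMblock, hQ₂, transpose_submatrix, submatrix_mul_equiv, submatrix_mul_equiv,
      fromBlocks_transpose, fromBlocks_multiply, fromBlocks_multiply]
    simp [Matrix.mul_assoc]
  rw [hT]
  constructor
  · intro i j hij
    by_cases hjk : (j : ℕ) < k
    · have hik : k ≤ (i : ℕ) := by omega
      rw [submatrix_apply, hsymm_ge i hik, hsymm_lt j hjk, fromBlocks_apply₂₁]
      exact Matrix.zero_apply _ _
    · push_neg at hjk
      have hik : k ≤ (i : ℕ) := by omega
      rw [submatrix_apply, hsymm_ge i hik, hsymm_ge j hjk]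
      exact hDq.1 _ _ (by simp; omega)
  · rintro ⟨i, h1, h2, hx1, hx2⟩
    rcases lt_trichotomy (i + 1) k with hc | hc | hc
    · -- i + 1 < k ≤ 2 so k = 2, i = 0 : second entry is in zero block
      apply hx2
      rw [submatrix_apply, hsymm_ge _ (by show k ≤ i + 2; omega),
        hsymm_lt _ (by show i + 1 < k; omega), fromBlocks_apply₂₁]
      exact Matrix.zero_apply _ _
    · -- i + 1 = k : first entry in zero block
      apply hx1
      rw [submatrix_apply, hsymm_ge _ (by show k ≤ i + 1; omega),
        hsymm_lt _ (by show i < k; omega), fromBlocks_apply₂₁]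
      exact Matrix.zero_apply _ _
    · -- k ≤ i : both entries in D' block
      have hik : k ≤ i := by omega
      apply hDq.2
      refine ⟨i - k, by omega, by omega, ?_, ?_⟩
      · have e1 := hsymm_ge (⟨i + 1, h1⟩ : Fin n) (by show k ≤ i + 1; omega)
        have e2 := hsymm_ge (⟨i, Nat.lt_of_succ_lt h1⟩ : Fin n) (by show k ≤ i; omega)
        have := hx1
        rw [submatrix_apply, e1, e2, fromBlocks_apply₂₂] at this
        convert this using 2
        · exact Fin.ext (show i - k + 1 = (i + 1) - k by omega)
      · have e1 := hsymm_ge (⟨i + 2, h2⟩ : Fin n) (by show k ≤ i + 2; omega)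
        have e2 := hsymm_ge (⟨i + 1, h1⟩ : Fin n) (by show k ≤ i + 1; omega)
        have := hx2
        rw [submatrix_apply, e1, e2, fromBlocks_apply₂₂] at this
        convert this using 2
        · exact Fin.ext (show i - k + 2 = (i + 2) - k by omega)
        · exact Fin.ext (show i - k + 1 = (i + 1) - k by omega)
end

section
/- For every pair of real n×n matrices A and B there exist real orthogonal n×n matrices Q₁ and Q₂ such that Q₂ᵀ A Q₁ is quasi-upper-triangular and Q₂ᵀ B Q₁ is upper triangular. -/
open Matrix

open Submodule

noncomputable section
namespace SchurAux

variable {n : ℕ}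

local notation "E" n => EuclideanSpace ℝ (Fin n)

def mv (M : Matrix (Fin n) (Fin n) ℝ) (x : E n) : E n := WithLp.toLp 2 (M *ᵥ x)

lemma mv_smul (M : Matrix (Fin n) (Fin n) ℝ) (c : ℝ) (x : E n) : mv M (c • x) = c • mv M x := by
  simp [mv, Matrix.mulVec_smul]

lemma mv_add (M : Matrix (Fin n) (Fin n) ℝ) (x y : E n) : mv M (x + y) = mv M x + mv M y := by
  simp [mv, Matrix.mulVec_add]

lemma mv_sub (M : Matrix (Fin n) (Fin n) ℝ) (x y : E n) : mv M (x - y) = mv M x - mv M y := by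
  simp [mv, Matrix.mulVec_sub]

lemma mv_zero (M : Matrix (Fin n) (Fin n) ℝ) : mv M (0 : E n) = 0 := by
  simp [mv]

lemma mv_mv (M N : Matrix (Fin n) (Fin n) ℝ) (x : E n) : mv M (mv N x) = mv (M * N) x := by
  simp [mv, Matrix.mulVec_mulVec]

lemma inner_eq (x y : E n) : (inner ℝ x y : ℝ) = ∑ i, x i * y i := by
  simp [PiLp.inner_apply, RCLike.inner_apply, mul_comm]

lemma exists_unit_span (hn : 0 < n) (w : E n) :
    ∃ u : E n, ‖u‖ = 1 ∧ w ∈ Submodule.span ℝ ({u} : Set (E n)) := by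
  by_cases hw : w = 0
  · refine ⟨EuclideanSpace.single ⟨0, hn⟩ (1:ℝ), ?_, by simp [hw]⟩
    simp [EuclideanSpace.norm_single]
  · refine ⟨(‖w‖⁻¹ : ℝ) • w, norm_smul_inv_norm hw, ?_⟩
    rw [Submodule.mem_span_singleton]
    exact ⟨‖w‖, by rw [smul_smul, mul_inv_cancel₀ (norm_ne_zero_iff.mpr hw), one_smul]⟩

lemma exists_unit_orth (hn : 2 ≤ n) (u : E n) :
    ∃ u₂ : E n, ‖u₂‖ = 1 ∧ (inner ℝ u u₂ : ℝ) = 0 := by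
  have hfr : Module.finrank ℝ (E n) = n := finrank_euclideanSpace_fin
  have hsum := Submodule.finrank_add_finrank_orthogonal (𝕜 := ℝ) (ℝ ∙ u)
  have hle : Module.finrank ℝ (ℝ ∙ u : Submodule ℝ (E n)) ≤ 1 := by
    by_cases hu : u = 0
    · subst hu; rw [Submodule.span_zero_singleton]; simp
    · rw [finrank_span_singleton hu]
  have hpos : 0 < Module.finrank ℝ ((ℝ ∙ u)ᗮ : Submodule ℝ (E n)) := by omega
  have : Nontrivial ((ℝ ∙ u)ᗮ : Submodule ℝ (E n)) := Module.nontrivial_of_finrank_pos hpos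
  obtain ⟨x, hx⟩ := exists_ne (0 : ((ℝ ∙ u)ᗮ : Submodule ℝ (E n)))
  have hxv : (x : E n) ≠ 0 := fun h => hx (Subtype.ext h)
  refine ⟨(‖(x:E n)‖⁻¹ : ℝ) • (x : E n), norm_smul_inv_norm hxv, ?_⟩
  rw [inner_smul_right]
  have : (inner ℝ u (x : E n) : ℝ) = 0 := by
    have := x.2
    rw [Submodule.mem_orthogonal] at this
    exact this u (Submodule.mem_span_singleton_self u)
  rw [this, mul_zero]

lemma exists_unit_pair (hn : 2 ≤ n) (w₁ w₂ : E n) :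
    ∃ u₁ u₂ : E n, ‖u₁‖ = 1 ∧ ‖u₂‖ = 1 ∧ (inner ℝ u₁ u₂ : ℝ) = 0 ∧
      w₁ ∈ Submodule.span ℝ ({u₁} : Set (E n)) ∧
      w₂ ∈ Submodule.span ℝ ({u₁, u₂} : Set (E n)) := by
  obtain ⟨u₁, hu₁, hw₁⟩ := exists_unit_span (by omega) w₁
  set w' : E n := w₂ - (inner ℝ u₁ w₂ : ℝ) • u₁ with hw'def
  have hu₁w' : (inner ℝ u₁ w' : ℝ) = 0 := by
    simp only [hw'def, inner_sub_right, inner_smul_right, real_inner_self_eq_norm_mul_norm, hu₁]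
    ring
  by_cases hw' : w' = 0
  · obtain ⟨u₂, hu₂, horth⟩ := exists_unit_orth hn u₁
    refine ⟨u₁, u₂, hu₁, hu₂, horth, hw₁, ?_⟩
    have h2 : w₂ = (inner ℝ u₁ w₂ : ℝ) • u₁ := by
      have h3 := hw'
      rw [hw'def, sub_eq_zero] at h3
      exact h3
    rw [h2]
    exact Submodule.smul_mem _ _ (Submodule.subset_span (by simp))
  · refine ⟨u₁, (‖w'‖⁻¹ : ℝ) • w', hu₁, norm_smul_inv_norm hw', ?_, hw₁, ?_⟩
    · rw [inner_smul_right, hu₁w', mul_zero]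
    · have hw2 : w₂ = (inner ℝ u₁ w₂ : ℝ) • u₁ + ‖w'‖ • ((‖w'‖⁻¹ : ℝ) • w') := by
        rw [smul_smul, mul_inv_cancel₀ (norm_ne_zero_iff.mpr hw'), one_smul, hw'def]
        abel
      rw [hw2]
      exact Submodule.add_mem _ (Submodule.smul_mem _ _ (Submodule.subset_span (by simp)))
        (Submodule.smul_mem _ _ (Submodule.subset_span (by simp)))

lemma basis_ext_one (hn : 0 < n) (u : E n) (hu : ‖u‖ = 1) :
    ∃ b : OrthonormalBasis (Fin n) ℝ (E n), b ⟨0, hn⟩ = u := by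
  have hcard : Module.finrank ℝ (E n) = Fintype.card (Fin n) := by
    simp [finrank_euclideanSpace_fin]
  have ho : Orthonormal ℝ (Set.restrict ({⟨0, hn⟩} : Set (Fin n)) (fun _ : Fin n => u)) := by
    rw [orthonormal_iff_ite]
    rintro ⟨i, hi⟩ ⟨j, hj⟩
    simp only [Set.mem_singleton_iff] at hi hj
    subst hi; subst hj
    rw [if_pos rfl]
    simp only [Set.restrict, Set.domRestrict_apply]
    rw [real_inner_self_eq_norm_mul_norm, hu, one_mul]
  obtain ⟨b, hb⟩ := ho.exists_orthonormalBasis_extension_of_card_eq hcard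
  exact ⟨b, hb _ rfl⟩

lemma basis_ext_two (hn : 2 ≤ n) (u₁ u₂ : E n) (h1 : ‖u₁‖ = 1) (h2 : ‖u₂‖ = 1)
    (h12 : (inner ℝ u₁ u₂ : ℝ) = 0) :
    ∃ b : OrthonormalBasis (Fin n) ℝ (E n),
      b ⟨0, by omega⟩ = u₁ ∧ b ⟨1, by omega⟩ = u₂ := by
  have hcard : Module.finrank ℝ (E n) = Fintype.card (Fin n) := by
    simp [finrank_euclideanSpace_fin]
  set v : Fin n → E n := fun l => if (l : ℕ) = 0 then u₁ else u₂ with hv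
  have ho : Orthonormal ℝ (Set.restrict {l : Fin n | (l : ℕ) < 2} v) := by
    have huu1 : (inner ℝ u₁ u₁ : ℝ) = 1 := by rw [real_inner_self_eq_norm_mul_norm, h1, one_mul]
    have huu2 : (inner ℝ u₂ u₂ : ℝ) = 1 := by rw [real_inner_self_eq_norm_mul_norm, h2, one_mul]
    have h21 : (inner ℝ u₂ u₁ : ℝ) = 0 := by rw [real_inner_comm]; exact h12
    rw [orthonormal_iff_ite]
    rintro ⟨i, hi⟩ ⟨j, hj⟩
    simp only [Set.mem_setOf_eq] at hi hj
    have hij : ((⟨i, hi⟩ : {l : Fin n | (l : ℕ) < 2}) = ⟨j, hj⟩) ↔ (i : ℕ) = (j : ℕ) := by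
      constructor
      · intro h; rw [Subtype.ext_iff] at h; exact congrArg Fin.val h
      · intro h; exact Subtype.ext (Fin.ext h)
    simp only [Set.restrict, Set.domRestrict_apply, hv]
    by_cases hi0 : (i : ℕ) = 0 <;> by_cases hj0 : (j : ℕ) = 0
    · rw [if_pos hi0, if_pos hj0, if_pos (by rw [hij]; omega), huu1]
    · rw [if_pos hi0, if_neg hj0, if_neg (by rw [hij]; omega), h12]
    · rw [if_neg hi0, if_pos hj0, if_neg (by rw [hij]; omega), h21]
    · rw [if_neg hi0, if_neg hj0, if_pos (by rw [hij]; omega), huu2]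
  obtain ⟨b, hb⟩ := ho.exists_orthonormalBasis_extension_of_card_eq hcard
  refine ⟨b, ?_, ?_⟩
  · rw [hb ⟨0, by omega⟩ (by simp)]
    simp [hv]
  · rw [hb ⟨1, by omega⟩ (by simp)]
    simp [hv]

def Qmat (b : OrthonormalBasis (Fin n) ℝ (E n)) : Matrix (Fin n) (Fin n) ℝ :=
  Matrix.of fun i j => b j i

lemma Qmat_orth (b : OrthonormalBasis (Fin n) ℝ (E n)) : (Qmat b)ᵀ * Qmat b = 1 := by
  ext i j
  have h := (orthonormal_iff_ite (𝕜 := ℝ)).mp b.orthonormal i j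
  rw [inner_eq] at h
  simp only [Matrix.mul_apply, Matrix.transpose_apply, Qmat, Matrix.of_apply, Matrix.one_apply]
  rw [← h]

lemma entry_eq (bu bv : OrthonormalBasis (Fin n) ℝ (E n)) (M : Matrix (Fin n) (Fin n) ℝ)
    (i j : Fin n) :
    ((Qmat bu)ᵀ * M * Qmat bv) i j = (inner ℝ (bu i) (mv M (bv j)) : ℝ) := by
  rw [inner_eq]
  simp only [Matrix.mul_apply, Matrix.transpose_apply, Qmat, Matrix.of_apply, mv, PiLp.toLp_apply, Matrix.mulVec,
    dotProduct, Finset.sum_mul, Finset.mul_sum]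
  rw [Finset.sum_comm]
  exact Finset.sum_congr rfl fun a _ => Finset.sum_congr rfl fun c _ => by ring

lemma inner_basis_span_zero (b : OrthonormalBasis (Fin n) ℝ (E n)) (P : Fin n → Prop)
    {i : Fin n} (hi : ¬ P i) {w : E n}
    (hw : w ∈ Submodule.span ℝ {x | ∃ l, P l ∧ b l = x}) : (inner ℝ (b i) w : ℝ) = 0 := by
  induction hw using Submodule.span_induction with
  | mem x hx =>
      obtain ⟨l, hl, rfl⟩ := hx
      have hil : i ≠ l := fun h => hi (h ▸ hl)
      rw [orthonormal_iff_ite.mp b.orthonormal i l, if_neg hil]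
  | zero => exact inner_zero_right _
  | add x y _ _ hx hy => rw [inner_add_right, hx, hy, add_zero]
  | smul c x _ hx => rw [real_inner_smul_right, hx, mul_zero]

lemma pencil_eig (hn : 0 < n) (A B : Matrix (Fin n) (Fin n) ℝ) :
    (∃ x : E n, x ≠ 0 ∧ ((∃ μ : ℝ, (mv A x) = μ • (mv B x)) ∨
        (mv B x) = 0)) ∨
    (∃ p q : E n, LinearIndependent ℝ ![p, q] ∧
      (mv A p) ∈ Submodule.span ℝ ({(mv B p), (mv B q)} : Set (E n)) ∧
      (mv A q) ∈ Submodule.span ℝ ({(mv B p), (mv B q)} : Set (E n))) := by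
  by_cases hdB : B.det = 0
  · obtain ⟨v, hv0, hv⟩ := Matrix.exists_mulVec_eq_zero_iff.mpr hdB
    exact Or.inl ⟨WithLp.toLp 2 v, by simpa using hv0, Or.inr (by simp [mv, hv])⟩
  · set C := B⁻¹ * A with hCdef
    have hBC : B * C = A := Matrix.mul_nonsing_inv_cancel_left B A (isUnit_iff_ne_zero.mpr hdB)
    set Cc : Matrix (Fin n) (Fin n) ℂ := C.map Complex.ofReal with hCc
    have hne : Nonempty (Fin n) := ⟨⟨0, hn⟩⟩
    obtain ⟨μ, hμ⟩ := Module.End.exists_eigenvalue (Matrix.toLin' Cc)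
    obtain ⟨z, hz⟩ := hμ.exists_hasEigenvector
    have hzC : Cc.mulVec z = μ • z := by
      have h := Module.End.mem_eigenspace_iff.mp hz.1
      rwa [Matrix.toLin'_apply] at h
    set p : E n := WithLp.toLp 2 (fun i => (z i).re) with hpdef
    set q : E n := WithLp.toLp 2 (fun i => (z i).im) with hqdef
    have key : ∀ i, (∑ j, (C i j : ℂ) * z j) = μ * z i := by
      intro i
      have hi := congrFun hzC i
      simpa [Matrix.mulVec, dotProduct, hCc, Matrix.map_apply] using hi
    have hre : ∀ i, (C.mulVec p) i = μ.re * p i - μ.im * q i := by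
      intro i
      have h := congrArg Complex.re (key i)
      rw [Complex.re_sum] at h
      simp only [Complex.mul_re, Complex.ofReal_re, Complex.ofReal_im, zero_mul, sub_zero] at h
      simpa [Matrix.mulVec, dotProduct, hpdef, hqdef] using h
    have him : ∀ i, (C.mulVec q) i = μ.im * p i + μ.re * q i := by
      intro i
      have h := congrArg Complex.im (key i)
      rw [Complex.im_sum] at h
      simp only [Complex.mul_im, Complex.ofReal_re, Complex.ofReal_im, zero_mul, add_zero] at h
      rw [add_comm] at h
      simpa [Matrix.mulVec, dotProduct, hpdef, hqdef] using h
    have hCp : mv C p = (μ.re • p - μ.im • q : E n) := by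
      ext i
      show (C.mulVec p) i = _
      rw [hre i]
      simp [PiLp.sub_apply, PiLp.smul_apply, smul_eq_mul]
    have hCq : mv C q = (μ.im • p + μ.re • q : E n) := by
      ext i
      show (C.mulVec q) i = _
      rw [him i]
      simp [PiLp.add_apply, PiLp.smul_apply, smul_eq_mul]
    have hAp : (mv A p) = μ.re • (mv B p) - μ.im • (mv B q) := by
      rw [← hBC, ← mv_mv, hCp]
      rw [mv_sub, mv_smul, mv_smul]
    have hAq : (mv A q) = μ.im • (mv B p) + μ.re • (mv B q) := by
      rw [← hBC, ← mv_mv, hCq]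
      rw [mv_add, mv_smul, mv_smul]
    by_cases hind : LinearIndependent ℝ ![p, q]
    · refine Or.inr ⟨p, q, hind, ?_, ?_⟩
      · rw [hAp]
        exact Submodule.sub_mem _
          (Submodule.smul_mem _ _ (Submodule.subset_span (by simp)))
          (Submodule.smul_mem _ _ (Submodule.subset_span (by simp)))
      · rw [hAq]
        exact Submodule.add_mem _
          (Submodule.smul_mem _ _ (Submodule.subset_span (by simp)))
          (Submodule.smul_mem _ _ (Submodule.subset_span (by simp)))
    · left
      rw [LinearIndependent.pair_iff] at hind
      push_neg at hind
      obtain ⟨s, t, hst, hst0⟩ := hind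
      have hz0 : ¬ (p = 0 ∧ q = 0) := by
        rintro ⟨hp0, hq0⟩
        apply hz.2
        funext i
        have h1 : p i = 0 := by simp [hp0]
        have h2 : q i = 0 := by simp [hq0]
        rw [hpdef] at h1
        rw [hqdef] at h2
        exact Complex.ext h1 h2
      by_cases ht : t = 0
      · have hs : s ≠ 0 := by tauto
        have hp0 : p = 0 := by
          have := hst
          rw [ht, zero_smul, add_zero] at this
          exact (smul_eq_zero.mp this).resolve_left hs
        have hq0 : q ≠ 0 := fun h => hz0 ⟨hp0, h⟩
        refine ⟨q, hq0, Or.inl ⟨μ.re, ?_⟩⟩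
        rw [hAq, hp0, mv_zero]
        simp
      · have hq : q = (-(s/t)) • p := by
          have h : t • q = -(s • p) := by
            rw [eq_neg_iff_add_eq_zero, add_comm]
            exact hst
          have := congrArg (fun y => (t⁻¹ : ℝ) • y) h
          simp only [smul_smul, inv_mul_cancel₀ ht, one_smul] at this
          rw [this, smul_neg, smul_smul, ← neg_smul]
          congr 1
          field_simp
        have hp0 : p ≠ 0 := by
          intro h
          apply hz0
          refine ⟨h, ?_⟩
          rw [hq, h, smul_zero]
        refine ⟨p, hp0, Or.inl ⟨μ.re + μ.im * (s/t), ?_⟩⟩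
        rw [hAp]
        have hBq : (mv B q) = (-(s/t)) • (mv B p) := by
          rw [hq, mv_smul]
        rw [hBq, smul_smul, sub_eq_add_neg, ← neg_smul, ← add_smul]
        congr 1
        ring

lemma deflate (hn : 0 < n) (A B : Matrix (Fin n) (Fin n) ℝ) :
    ∃ k m : ℕ, n = k + m ∧ (k = 1 ∨ k = 2) ∧
      ∃ bu bv : OrthonormalBasis (Fin n) ℝ (E n),
        (∀ j : Fin n, (j : ℕ) < k →
          (mv A (bv j)) ∈ Submodule.span ℝ {x | ∃ l : Fin n, (l : ℕ) < k ∧ bu l = x}) ∧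
        (∀ j : Fin n, (j : ℕ) < k →
          (mv B (bv j)) ∈ Submodule.span ℝ {x | ∃ l : Fin n, (l : ℕ) ≤ (j : ℕ) ∧ bu l = x}) := by
  rcases pencil_eig hn A B with ⟨x, hx0, hwit⟩ | ⟨p, q, hind, hAp, hAq⟩
  · -- k = 1 case
    refine ⟨1, n - 1, by omega, Or.inl rfl, ?_⟩
    set v : E n := (‖x‖⁻¹ : ℝ) • x with hvdef
    have hvn : ‖v‖ = 1 := norm_smul_inv_norm hx0
    have hAv : (mv A v) = (‖x‖⁻¹ : ℝ) • (mv A x) := mv_smul _ _ _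
    have hBv : (mv B v) = (‖x‖⁻¹ : ℝ) • (mv B x) := mv_smul _ _ _
    have hmain : ∃ u : E n, ‖u‖ = 1 ∧ (mv A v) ∈ Submodule.span ℝ ({u} : Set (E n)) ∧
        (mv B v) ∈ Submodule.span ℝ ({u} : Set (E n)) := by
      rcases hwit with ⟨μ, hμ⟩ | hB0
      · obtain ⟨u, hu, hBu⟩ := exists_unit_span hn (mv B v)
        refine ⟨u, hu, ?_, hBu⟩
        have : (mv A v) = μ • (mv B v) := by
          rw [hAv, hBv, hμ, smul_comm]
        rw [this]
        exact Submodule.smul_mem _ _ hBu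
      · obtain ⟨u, hu, hAu⟩ := exists_unit_span hn (mv A v)
        refine ⟨u, hu, hAu, ?_⟩
        rw [hBv, hB0, smul_zero]
        exact Submodule.zero_mem _
    obtain ⟨u, hu, hAu, hBu⟩ := hmain
    obtain ⟨bu, hbu⟩ := basis_ext_one hn u hu
    obtain ⟨bv, hbv⟩ := basis_ext_one hn v hvn
    have hjeq : ∀ j : Fin n, (j : ℕ) < 1 → j = ⟨0, hn⟩ := fun j hj => Fin.ext (show (j : ℕ) = 0 by omega)
    refine ⟨bu, bv, ?_, ?_⟩
    · intro j hj
      rw [hjeq j hj, hbv]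
      refine Submodule.span_mono ?_ hAu
      intro y hy
      rw [Set.mem_singleton_iff] at hy
      exact ⟨⟨0, hn⟩, by simp, by rw [hbu, hy]⟩
    · intro j hj
      rw [hjeq j hj, hbv]
      refine Submodule.span_mono ?_ hBu
      intro y hy
      rw [Set.mem_singleton_iff] at hy
      exact ⟨⟨0, hn⟩, by simp, by rw [hbu, hy]⟩
  · -- k = 2 case
    have hn2 : 2 ≤ n := by
      have h := hind.fintype_card_le_finrank
      rwa [Fintype.card_fin, finrank_euclideanSpace_fin] at h
    have hp0 : p ≠ 0 := by
      have h := hind.ne_zero 0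
      simpa using h
    obtain ⟨v₁, hv₁def⟩ : ∃ y : E n, y = (‖p‖⁻¹ : ℝ) • p := ⟨_, rfl⟩
    have hv₁n : ‖v₁‖ = 1 := by rw [hv₁def]; exact norm_smul_inv_norm hp0
    obtain ⟨c, hcdef⟩ : ∃ y : ℝ, y = (inner ℝ v₁ q : ℝ) := ⟨_, rfl⟩
    obtain ⟨w, hwdef⟩ : ∃ y : E n, y = q - c • v₁ := ⟨_, rfl⟩
    have hw0 : w ≠ 0 := by
      intro h
      have hq : q = (c * ‖p‖⁻¹) • p := by
        rw [← smul_smul, ← hv₁def]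
        rw [hwdef, sub_eq_zero] at h
        exact h
      have := (LinearIndependent.pair_iff.mp hind (c * ‖p‖⁻¹) (-1)
        (by rw [← hq]; simp)).2
      norm_num at this
    obtain ⟨v₂, hv₂def⟩ : ∃ y : E n, y = (‖w‖⁻¹ : ℝ) • w := ⟨_, rfl⟩
    have hv₂n : ‖v₂‖ = 1 := by rw [hv₂def]; exact norm_smul_inv_norm hw0
    have hv₁₂ : (inner ℝ v₁ v₂ : ℝ) = 0 := by
      rw [hv₂def, inner_smul_right, hwdef, inner_sub_right, inner_smul_right,
        real_inner_self_eq_norm_mul_norm, hv₁n, ← hcdef]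
      simp
    obtain ⟨u₁, u₂, hu₁, hu₂, hu₁₂, hBv₁, hBv₂⟩ :=
      exists_unit_pair hn2 (mv B v₁) (mv B v₂)
    obtain ⟨bu, hbu0, hbu1⟩ := basis_ext_two hn2 u₁ u₂ hu₁ hu₂ hu₁₂
    obtain ⟨bv, hbv0, hbv1⟩ := basis_ext_two hn2 v₁ v₂ hv₁n hv₂n hv₁₂
    -- the span of {u₁, u₂}
    obtain ⟨U, hUdef⟩ : ∃ y : Submodule ℝ (E n), y = Submodule.span ℝ ({u₁, u₂} : Set (E n)) :=
      ⟨_, rfl⟩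
    have hu₁U : u₁ ∈ U := hUdef ▸ Submodule.subset_span (by simp)
    have hu₂U : u₂ ∈ U := hUdef ▸ Submodule.subset_span (by simp)
    have hBv₁U : (mv B v₁) ∈ U :=
      hUdef ▸ Submodule.span_mono (Set.singleton_subset_iff.mpr (by simp)) hBv₁
    have hBv₂U : (mv B v₂) ∈ U := hUdef ▸ hBv₂
    -- p and q in terms of v₁ v₂
    have hpv : p = (‖p‖ : ℝ) • v₁ := by
      rw [hv₁def, smul_smul, mul_inv_cancel₀ (norm_ne_zero_iff.mpr hp0), one_smul]
    have hqv : q = (‖w‖ : ℝ) • v₂ + c • v₁ := by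
      rw [hv₂def, smul_smul, mul_inv_cancel₀ (norm_ne_zero_iff.mpr hw0), one_smul, hwdef]
      abel
    have hBpU : (mv B p) ∈ U := by
      rw [hpv, mv_smul]
      exact Submodule.smul_mem _ _ hBv₁U
    have hBqU : (mv B q) ∈ U := by
      rw [hqv, mv_add, mv_smul, mv_smul]
      exact Submodule.add_mem _ (Submodule.smul_mem _ _ hBv₂U) (Submodule.smul_mem _ _ hBv₁U)
    have hSU : Submodule.span ℝ ({(mv B p), (mv B q)} : Set (E n)) ≤ U := by
      rw [Submodule.span_le]
      rintro y (rfl | hy)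
      · exact hBpU
      · rw [Set.mem_singleton_iff] at hy
        rw [hy]
        exact hBqU
    have hApU : (mv A p) ∈ U := hSU hAp
    have hAqU : (mv A q) ∈ U := hSU hAq
    have hAv₁U : (mv A v₁) ∈ U := by
      rw [hv₁def, mv_smul]
      exact Submodule.smul_mem _ _ hApU
    have hAv₂U : (mv A v₂) ∈ U := by
      rw [hv₂def, mv_smul, hwdef, mv_sub, mv_smul]
      exact Submodule.smul_mem _ _ (Submodule.sub_mem _ hAqU (Submodule.smul_mem _ _ hAv₁U))
    have hUle2 : U ≤ Submodule.span ℝ {x : E n | ∃ l : Fin n, (l : ℕ) < 2 ∧ bu l = x} := by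
      rw [hUdef, Submodule.span_le]
      rintro y (rfl | hy)
      · exact Submodule.subset_span ⟨⟨0, by omega⟩, by simp, hbu0⟩
      · rw [Set.mem_singleton_iff] at hy
        rw [hy]
        exact Submodule.subset_span ⟨⟨1, by omega⟩, by simp, hbu1⟩
    refine ⟨2, n - 2, by omega, Or.inr rfl, bu, bv, ?_, ?_⟩
    · intro j hj
      rcases (by omega : (j : ℕ) = 0 ∨ (j : ℕ) = 1) with h | h
      · have hj0 : j = ⟨0, by omega⟩ := Fin.ext h
        rw [hj0, hbv0]
        exact hUle2 hAv₁U
      · have hj1 : j = ⟨1, by omega⟩ := Fin.ext h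
        rw [hj1, hbv1]
        exact hUle2 hAv₂U
    · intro j hj
      rcases (by omega : (j : ℕ) = 0 ∨ (j : ℕ) = 1) with h | h
      · have hj0 : j = ⟨0, by omega⟩ := Fin.ext h
        rw [hj0, hbv0]
        refine Submodule.span_mono ?_ hBv₁
        intro y hy
        rw [Set.mem_singleton_iff] at hy
        exact ⟨⟨0, by omega⟩, by simp [hj0, h], by rw [hbu0, hy]⟩
      · have hj1 : j = ⟨1, by omega⟩ := Fin.ext h
        rw [hj1, hbv1]
        refine Submodule.span_mono ?_ hBv₂
        rintro y (rfl | hy)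
        · exact ⟨⟨0, by omega⟩, by simp [hj1, h], hbu0⟩
        · rw [Set.mem_singleton_iff] at hy
          rw [hy]
          exact ⟨⟨1, by omega⟩, by simp [hj1, h], hbu1⟩

section Blocks

variable {k m : ℕ}

lemma esymm_lt (i : Fin (k + m)) (h : (i : ℕ) < k) :
    finSumFinEquiv.symm i = Sum.inl (⟨i, h⟩ : Fin k) := by
  rw [Equiv.symm_apply_eq]
  exact Fin.ext (by simp)

lemma esymm_ge (i : Fin (k + m)) (h : k ≤ (i : ℕ)) :
    finSumFinEquiv.symm i = Sum.inr (⟨(i : ℕ) - k, by omega⟩ : Fin m) := by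
  rw [Equiv.symm_apply_eq]
  refine Fin.ext ?_
  simp only [finSumFinEquiv_apply_right, Fin.coe_natAdd]
  omega

lemma quasi_lift (hk : k = 1 ∨ k = 2)
    (F11 : Matrix (Fin k) (Fin k) ℝ) (F12 : Matrix (Fin k) (Fin m) ℝ)
    (M : Matrix (Fin m) (Fin m) ℝ) (hM : QuasiUpperTriangular M) :
    QuasiUpperTriangular ((fromBlocks F11 F12 0 M).submatrix
      (finSumFinEquiv.symm : Fin (k + m) → Fin k ⊕ Fin m)
      (finSumFinEquiv.symm : Fin (k + m) → Fin k ⊕ Fin m)) := by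
  have hk2 : k ≤ 2 := by rcases hk with rfl | rfl <;> omega
  constructor
  · intro i j hij
    rw [Matrix.submatrix_apply]
    by_cases hjk : (j : ℕ) < k
    · by_cases hik : (i : ℕ) < k
      · omega
      · rw [esymm_ge i (by omega), esymm_lt j hjk, Matrix.fromBlocks_apply₂₁]
        rfl
    · have hik : k ≤ (i : ℕ) := by omega
      rw [esymm_ge i hik, esymm_ge j (by omega), Matrix.fromBlocks_apply₂₂]
      exact hM.1 _ _ (by simp; omega)
  · rintro ⟨i0, h1, h2, hx, hy⟩
    by_cases hc1 : i0 + 1 < k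
    · apply hy
      rw [Matrix.submatrix_apply, esymm_ge ⟨i0 + 2, h2⟩ (by simp; omega),
        esymm_lt ⟨i0 + 1, h1⟩ (by simpa using hc1), Matrix.fromBlocks_apply₂₁]
      rfl
    · by_cases hc2 : i0 < k
      · apply hx
        rw [Matrix.submatrix_apply, esymm_ge ⟨i0 + 1, h1⟩ (by simp; omega),
          esymm_lt ⟨i0, _⟩ (by simpa using hc2), Matrix.fromBlocks_apply₂₁]
        rfl
      · have hik : k ≤ i0 := by omega
        apply hM.2
        refine ⟨i0 - k, by omega, by omega, ?_, ?_⟩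
        · have ex := hx
          rw [Matrix.submatrix_apply, esymm_ge ⟨i0 + 1, h1⟩ (by simp; omega),
            esymm_ge ⟨i0, _⟩ (by simpa using hik), Matrix.fromBlocks_apply₂₂] at ex
          convert ex using 3 <;> simp <;> omega
        · have ey := hy
          rw [Matrix.submatrix_apply, esymm_ge ⟨i0 + 2, h2⟩ (by simp; omega),
            esymm_ge ⟨i0 + 1, h1⟩ (by simp; omega), Matrix.fromBlocks_apply₂₂] at ey
          convert ey using 3 <;> simp <;> omega

lemma tri_lift (F11 : Matrix (Fin k) (Fin k) ℝ) (F12 : Matrix (Fin k) (Fin m) ℝ)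
    (M : Matrix (Fin m) (Fin m) ℝ)
    (hF11 : ∀ i j : Fin k, j < i → F11 i j = 0)
    (hM : ∀ i j : Fin m, j < i → M i j = 0) :
    ∀ i j : Fin (k + m), j < i → ((fromBlocks F11 F12 0 M).submatrix
      (finSumFinEquiv.symm : Fin (k + m) → Fin k ⊕ Fin m)
      (finSumFinEquiv.symm : Fin (k + m) → Fin k ⊕ Fin m)) i j = 0 := by
  intro i j hij
  have hij' : (j : ℕ) < (i : ℕ) := hij
  rw [Matrix.submatrix_apply]
  by_cases hjk : (j : ℕ) < k
  · by_cases hik : (i : ℕ) < k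
    · rw [esymm_lt i hik, esymm_lt j hjk, Matrix.fromBlocks_apply₁₁]
      exact hF11 _ _ (by simpa using hij')
    · rw [esymm_ge i (by omega), esymm_lt j hjk, Matrix.fromBlocks_apply₂₁]
      rfl
  · rw [esymm_ge i (by omega), esymm_ge j (by omega), Matrix.fromBlocks_apply₂₂]
    exact hM _ _ (by simp; omega)

lemma P_orth (q : Matrix (Fin m) (Fin m) ℝ) (hq : qᵀ * q = 1) :
    ((fromBlocks (1 : Matrix (Fin k) (Fin k) ℝ) 0 0 q).submatrix
        (finSumFinEquiv.symm : Fin (k + m) → Fin k ⊕ Fin m) finSumFinEquiv.symm)ᵀ *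
      ((fromBlocks (1 : Matrix (Fin k) (Fin k) ℝ) 0 0 q).submatrix
        (finSumFinEquiv.symm : Fin (k + m) → Fin k ⊕ Fin m) finSumFinEquiv.symm) = 1 := by
  rw [Matrix.transpose_submatrix, Matrix.fromBlocks_transpose]
  rw [Matrix.submatrix_mul_equiv _ _ _ finSumFinEquiv.symm _]
  rw [Matrix.fromBlocks_multiply]
  simp only [Matrix.one_mul, Matrix.mul_one, Matrix.zero_mul, Matrix.mul_zero, add_zero,
    zero_add, Matrix.transpose_one, Matrix.transpose_zero, hq, Matrix.fromBlocks_one]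
  exact Matrix.submatrix_one_equiv finSumFinEquiv.symm

lemma conj_blocks (T : Matrix (Fin (k + m)) (Fin (k + m)) ℝ)
    (q₁ q₂ : Matrix (Fin m) (Fin m) ℝ) :
    ((fromBlocks (1 : Matrix (Fin k) (Fin k) ℝ) 0 0 q₂).submatrix
        (finSumFinEquiv.symm : Fin (k + m) → Fin k ⊕ Fin m) finSumFinEquiv.symm)ᵀ * T *
      ((fromBlocks (1 : Matrix (Fin k) (Fin k) ℝ) 0 0 q₁).submatrix
        (finSumFinEquiv.symm : Fin (k + m) → Fin k ⊕ Fin m) finSumFinEquiv.symm) =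
    (fromBlocks ((T.submatrix (finSumFinEquiv : Fin k ⊕ Fin m ≃ Fin (k+m)) finSumFinEquiv).toBlocks₁₁)
        ((T.submatrix (finSumFinEquiv : Fin k ⊕ Fin m ≃ Fin (k+m)) finSumFinEquiv).toBlocks₁₂ * q₁)
        (q₂ᵀ * ((T.submatrix (finSumFinEquiv : Fin k ⊕ Fin m ≃ Fin (k+m)) finSumFinEquiv).toBlocks₂₁))
        (q₂ᵀ * ((T.submatrix (finSumFinEquiv : Fin k ⊕ Fin m ≃ Fin (k+m)) finSumFinEquiv).toBlocks₂₂) * q₁)).submatrix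
      (finSumFinEquiv.symm : Fin (k + m) → Fin k ⊕ Fin m) finSumFinEquiv.symm := by
  have hT : T = (T.submatrix (finSumFinEquiv : Fin k ⊕ Fin m ≃ Fin (k+m)) finSumFinEquiv).submatrix
      (finSumFinEquiv.symm : Fin (k + m) → Fin k ⊕ Fin m) finSumFinEquiv.symm := by
    rw [Matrix.submatrix_submatrix]
    simp only [Function.comp_def, Equiv.apply_symm_apply]
    rfl
  rw [Matrix.transpose_submatrix, Matrix.fromBlocks_transpose]
  conv_lhs => rw [hT]
  rw [Matrix.submatrix_mul_equiv _ _ _ finSumFinEquiv.symm _,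
    Matrix.submatrix_mul_equiv _ _ _ finSumFinEquiv.symm _]
  congr 1
  conv_lhs => rw [← Matrix.fromBlocks_toBlocks (T.submatrix (finSumFinEquiv : Fin k ⊕ Fin m ≃ Fin (k+m)) finSumFinEquiv)]
  rw [Matrix.fromBlocks_multiply, Matrix.fromBlocks_multiply]
  simp [Matrix.transpose_one]

end Blocks

end SchurAux

/-- Real generalized Schur decomposition of a matrix pencil. -/
theorem real_generalized_schur_decomposition (n : ℕ) (A B : Matrix (Fin n) (Fin n) ℝ) :
    ∃ Q₁ Q₂ : Matrix (Fin n) (Fin n) ℝ, Q₁ᵀ * Q₁ = 1 ∧ Q₂ᵀ * Q₂ = 1 ∧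
      QuasiUpperTriangular (Q₂ᵀ * A * Q₁) ∧
      (∀ i j : Fin n, j < i → (Q₂ᵀ * B * Q₁) i j = 0) := by
  induction n using Nat.strong_induction_on with
  | _ n IH =>
  by_cases hn0 : n = 0
  · subst hn0
    refine ⟨1, 1, by simp, by simp, ⟨fun i j _ => i.elim0, ?_⟩, fun i j _ => i.elim0⟩
    rintro ⟨i, h1, -, -⟩
    omega
  · obtain ⟨k, m, hnkm, hk, bu, bv, hA, hB⟩ := SchurAux.deflate (Nat.pos_of_ne_zero hn0) A B
    subst hnkm
    have hk1 : 1 ≤ k := by rcases hk with rfl | rfl <;> omega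
    obtain ⟨q₁, q₂, hq₁, hq₂, hqA, hqB⟩ := IH m (by omega)
      ((((SchurAux.Qmat bu)ᵀ * A * SchurAux.Qmat bv).submatrix
        (finSumFinEquiv : Fin k ⊕ Fin m ≃ Fin (k + m)) finSumFinEquiv).toBlocks₂₂)
      ((((SchurAux.Qmat bu)ᵀ * B * SchurAux.Qmat bv).submatrix
        (finSumFinEquiv : Fin k ⊕ Fin m ≃ Fin (k + m)) finSumFinEquiv).toBlocks₂₂)
    refine ⟨SchurAux.Qmat bv * (fromBlocks (1 : Matrix (Fin k) (Fin k) ℝ) 0 0 q₁).submatrix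
        (finSumFinEquiv.symm : Fin (k + m) → Fin k ⊕ Fin m) finSumFinEquiv.symm,
      SchurAux.Qmat bu * (fromBlocks (1 : Matrix (Fin k) (Fin k) ℝ) 0 0 q₂).submatrix
        (finSumFinEquiv.symm : Fin (k + m) → Fin k ⊕ Fin m) finSumFinEquiv.symm, ?_, ?_, ?_, ?_⟩
    · rw [Matrix.transpose_mul, Matrix.mul_assoc, ← Matrix.mul_assoc ((SchurAux.Qmat bv)ᵀ),
        SchurAux.Qmat_orth bv, Matrix.one_mul, SchurAux.P_orth q₁ hq₁]
    · rw [Matrix.transpose_mul, Matrix.mul_assoc, ← Matrix.mul_assoc ((SchurAux.Qmat bu)ᵀ),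
        SchurAux.Qmat_orth bu, Matrix.one_mul, SchurAux.P_orth q₂ hq₂]
    · have hrw : (SchurAux.Qmat bu * (fromBlocks (1 : Matrix (Fin k) (Fin k) ℝ) 0 0 q₂).submatrix
          (finSumFinEquiv.symm : Fin (k + m) → Fin k ⊕ Fin m) finSumFinEquiv.symm)ᵀ * A *
          (SchurAux.Qmat bv * (fromBlocks (1 : Matrix (Fin k) (Fin k) ℝ) 0 0 q₁).submatrix
            (finSumFinEquiv.symm : Fin (k + m) → Fin k ⊕ Fin m) finSumFinEquiv.symm) =
          ((fromBlocks (1 : Matrix (Fin k) (Fin k) ℝ) 0 0 q₂).submatrix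
            (finSumFinEquiv.symm : Fin (k + m) → Fin k ⊕ Fin m) finSumFinEquiv.symm)ᵀ *
          ((SchurAux.Qmat bu)ᵀ * A * SchurAux.Qmat bv) *
          ((fromBlocks (1 : Matrix (Fin k) (Fin k) ℝ) 0 0 q₁).submatrix
            (finSumFinEquiv.symm : Fin (k + m) → Fin k ⊕ Fin m) finSumFinEquiv.symm) := by
        rw [Matrix.transpose_mul]
        simp only [Matrix.mul_assoc]
      rw [hrw, SchurAux.conj_blocks]
      have h21 : (((SchurAux.Qmat bu)ᵀ * A * SchurAux.Qmat bv).submatrix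
          (finSumFinEquiv : Fin k ⊕ Fin m ≃ Fin (k + m)) finSumFinEquiv).toBlocks₂₁ = 0 := by
        ext a b
        simp only [Matrix.toBlocks₂₁, Matrix.of_apply, Matrix.submatrix_apply,
          Matrix.zero_apply]
        rw [SchurAux.entry_eq]
        refine SchurAux.inner_basis_span_zero bu (fun l => (l : ℕ) < k) ?_ (hA _ ?_)
        · simp only [Equiv.coe_trans, finSumFinEquiv_apply_right, Fin.coe_natAdd]
          omega
        · simp
      rw [h21, Matrix.mul_zero]
      exact SchurAux.quasi_lift hk _ _ _ hqA
    · have hrw : (SchurAux.Qmat bu * (fromBlocks (1 : Matrix (Fin k) (Fin k) ℝ) 0 0 q₂).submatrix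
          (finSumFinEquiv.symm : Fin (k + m) → Fin k ⊕ Fin m) finSumFinEquiv.symm)ᵀ * B *
          (SchurAux.Qmat bv * (fromBlocks (1 : Matrix (Fin k) (Fin k) ℝ) 0 0 q₁).submatrix
            (finSumFinEquiv.symm : Fin (k + m) → Fin k ⊕ Fin m) finSumFinEquiv.symm) =
          ((fromBlocks (1 : Matrix (Fin k) (Fin k) ℝ) 0 0 q₂).submatrix
            (finSumFinEquiv.symm : Fin (k + m) → Fin k ⊕ Fin m) finSumFinEquiv.symm)ᵀ *
          ((SchurAux.Qmat bu)ᵀ * B * SchurAux.Qmat bv) *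
          ((fromBlocks (1 : Matrix (Fin k) (Fin k) ℝ) 0 0 q₁).submatrix
            (finSumFinEquiv.symm : Fin (k + m) → Fin k ⊕ Fin m) finSumFinEquiv.symm) := by
        rw [Matrix.transpose_mul]
        simp only [Matrix.mul_assoc]
      rw [hrw, SchurAux.conj_blocks]
      have h21 : (((SchurAux.Qmat bu)ᵀ * B * SchurAux.Qmat bv).submatrix
          (finSumFinEquiv : Fin k ⊕ Fin m ≃ Fin (k + m)) finSumFinEquiv).toBlocks₂₁ = 0 := by
        ext a b
        simp only [Matrix.toBlocks₂₁, Matrix.of_apply, Matrix.submatrix_apply,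
          Matrix.zero_apply]
        rw [SchurAux.entry_eq]
        refine SchurAux.inner_basis_span_zero bu
          (fun l => (l : ℕ) ≤ ((finSumFinEquiv (Sum.inl b) : Fin (k + m)) : ℕ)) ?_ (hB _ ?_)
        · simp only [finSumFinEquiv_apply_right, finSumFinEquiv_apply_left, Fin.coe_natAdd,
            Fin.coe_castAdd]
          omega
        · simp
      rw [h21, Matrix.mul_zero]
      have h11 : ∀ i j : Fin k, j < i →
          ((((SchurAux.Qmat bu)ᵀ * B * SchurAux.Qmat bv).submatrix
            (finSumFinEquiv : Fin k ⊕ Fin m ≃ Fin (k + m)) finSumFinEquiv).toBlocks₁₁) i j = 0 := by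
        intro i j hij
        simp only [Matrix.toBlocks₁₁, Matrix.of_apply, Matrix.submatrix_apply]
        rw [SchurAux.entry_eq]
        refine SchurAux.inner_basis_span_zero bu
          (fun l => (l : ℕ) ≤ ((finSumFinEquiv (Sum.inl j) : Fin (k + m)) : ℕ)) ?_ (hB _ ?_)
        · simp only [finSumFinEquiv_apply_left, Fin.coe_castAdd]
          exact fun h => absurd h (by simpa using hij.not_ge)
        · simp
      exact SchurAux.tri_lift _ _ _ h11 hqB
end
end

section
/- For every pair of complex n×n matrices A and B there exist unitary n×n matrices U₁ and U₂ such that U₂ᴴ A U₁ and U₂ᴴ B U₁ are both upper triangular (where U₂ᴴ denotes the conjugate transpose of U₂). -/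
open Matrix

namespace QZAux
noncomputable section
variable {n : ℕ}

/-- Put a 1 in the top-left corner and `V` in the bottom-right block. -/
def dilate (V : Matrix (Fin n) (Fin n) ℂ) : Matrix (Fin (n+1)) (Fin (n+1)) ℂ :=
  Matrix.of fun i j =>
    Fin.cases (Fin.cases 1 (fun _ => 0) j) (fun i' => Fin.cases 0 (fun j' => V i' j') j) i

@[simp] lemma dilate_zz (V : Matrix (Fin n) (Fin n) ℂ) : dilate V 0 0 = 1 := rfl
@[simp] lemma dilate_zs (V : Matrix (Fin n) (Fin n) ℂ) (j : Fin n) :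
    dilate V 0 j.succ = 0 := by simp [dilate]
@[simp] lemma dilate_sz (V : Matrix (Fin n) (Fin n) ℂ) (i : Fin n) :
    dilate V i.succ 0 = 0 := by simp [dilate]
@[simp] lemma dilate_ss (V : Matrix (Fin n) (Fin n) ℂ) (i j : Fin n) :
    dilate V i.succ j.succ = V i j := by simp [dilate]

lemma dilate_conjTranspose (V : Matrix (Fin n) (Fin n) ℂ) :
    (dilate V)ᴴ = dilate Vᴴ := by
  ext i j
  cases i using Fin.cases <;> cases j using Fin.cases <;>
    simp [conjTranspose_apply]

lemma dilate_mul (V W : Matrix (Fin n) (Fin n) ℂ) :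
    dilate V * dilate W = dilate (V * W) := by
  ext i j
  cases i using Fin.cases <;> cases j using Fin.cases <;>
    simp [Matrix.mul_apply, Fin.sum_univ_succ]

lemma dilate_one : dilate (1 : Matrix (Fin n) (Fin n) ℂ) = 1 := by
  ext i j
  cases i using Fin.cases <;> cases j using Fin.cases <;>
    simp [Matrix.one_apply, Fin.succ_inj, (Fin.succ_ne_zero _).symm, Fin.succ_ne_zero]

lemma dilate_sandwich_sz (M : Matrix (Fin (n+1)) (Fin (n+1)) ℂ)
    (V₁ V₂ : Matrix (Fin n) (Fin n) ℂ) (hM : ∀ i : Fin n, M i.succ 0 = 0) (i : Fin n) :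
    (dilate V₂ᴴ * M * dilate V₁) i.succ 0 = 0 := by
  simp [Matrix.mul_apply, Fin.sum_univ_succ, hM]

lemma dilate_sandwich_ss (M : Matrix (Fin (n+1)) (Fin (n+1)) ℂ)
    (V₁ V₂ : Matrix (Fin n) (Fin n) ℂ) (i j : Fin n) :
    (dilate V₂ᴴ * M * dilate V₁) i.succ j.succ
      = (V₂ᴴ * M.submatrix Fin.succ Fin.succ * V₁) i j := by
  simp only [Matrix.mul_apply, Fin.sum_univ_succ, dilate_zz, dilate_zs, dilate_sz, dilate_ss,
    conjTranspose_apply, submatrix_apply, mul_zero, zero_mul, mul_one, one_mul, add_zero,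
    zero_add, Finset.sum_const_zero, Finset.mul_sum, Finset.sum_mul]

lemma norm_normalize {m : ℕ} (v : EuclideanSpace ℂ (Fin m)) (hv : v ≠ 0) :
    ‖((‖v‖ : ℂ))⁻¹ • v‖ = 1 := by
  have h : ‖v‖ ≠ 0 := norm_ne_zero_iff.mpr hv
  rw [norm_smul, norm_inv, Complex.norm_real, Real.norm_eq_abs, abs_of_nonneg (norm_nonneg v),
    inv_mul_cancel₀ h]

/-- Deflation: a common unit "eigenvector" pair for the pencil (A, B). -/
lemma exists_common (A B : Matrix (Fin (n+1)) (Fin (n+1)) ℂ) :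
    ∃ (x y : EuclideanSpace ℂ (Fin (n+1))) (α β : ℂ), ‖x‖ = 1 ∧ ‖y‖ = 1 ∧
      A.mulVec x = α • y ∧ B.mulVec x = β • y := by
  by_cases hdet : B.det = 0
  · obtain ⟨v, hv0, hv⟩ := (Matrix.exists_mulVec_eq_zero_iff).mpr hdet
    set vE : EuclideanSpace ℂ (Fin (n+1)) := WithLp.toLp 2 v with hvE
    have hv0E : vE ≠ 0 := by simpa [hvE] using hv0
    set x : EuclideanSpace ℂ (Fin (n+1)) := ((‖vE‖ : ℂ))⁻¹ • vE with hxdef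
    have hx : ‖x‖ = 1 := norm_normalize vE hv0E
    have hBx : B.mulVec x = 0 := by
      show B.mulVec (((‖vE‖ : ℂ))⁻¹ • vE) = 0
      rw [Matrix.mulVec_smul]
      show _ • B.mulVec v = _
      rw [hv, smul_zero]
    set w : EuclideanSpace ℂ (Fin (n+1)) := WithLp.toLp 2 (A.mulVec x) with hwdef
    by_cases hw : w = 0
    · refine ⟨x, EuclideanSpace.single 0 1, 0, 0, hx, by simp, ?_, ?_⟩
      · rw [zero_smul]; exact congrArg WithLp.ofLp hw
      · rw [zero_smul]; exact hBx
    · refine ⟨x, ((‖w‖ : ℂ))⁻¹ • w, (‖w‖ : ℂ), 0, hx, norm_normalize w hw, ?_, ?_⟩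
      · rw [WithLp.ofLp_smul, WithLp.ofLp_smul, smul_smul]
        have h : (‖w‖ : ℂ) ≠ 0 := by exact_mod_cast norm_ne_zero_iff.mpr hw
        rw [mul_inv_cancel₀ h, one_smul]
        rfl
      · rw [zero_smul]; exact hBx
  · have hunit : IsUnit B.det := isUnit_iff_ne_zero.mpr hdet
    set M := B⁻¹ * A with hM
    obtain ⟨μ, hμ⟩ := Module.End.exists_eigenvalue (Matrix.toLin' M)
    obtain ⟨v, hv⟩ := hμ.exists_hasEigenvector
    have hv0 : v ≠ 0 := hv.2
    set vE : EuclideanSpace ℂ (Fin (n+1)) := WithLp.toLp 2 v with hvE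
    have hv0E : vE ≠ 0 := by simpa [hvE] using hv0
    have hMv : M.mulVec v = μ • v := by
      have := hv.apply_eq_smul
      rwa [Matrix.toLin'_apply] at this
    have hAv : A.mulVec v = μ • B.mulVec v := by
      have h1 : B * M = A := by
        rw [hM, ← Matrix.mul_assoc, Matrix.mul_nonsing_inv B hunit, Matrix.one_mul]
      calc A.mulVec v = (B * M).mulVec v := by rw [h1]
        _ = B.mulVec (M.mulVec v) := by rw [← Matrix.mulVec_mulVec]
        _ = μ • B.mulVec v := by rw [hMv, Matrix.mulVec_smul]
    set w : EuclideanSpace ℂ (Fin (n+1)) := WithLp.toLp 2 (B.mulVec v) with hwdef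
    have hw0 : w ≠ 0 := by
      intro h
      exact hdet ((Matrix.exists_mulVec_eq_zero_iff).mp ⟨v, hv0, congrArg WithLp.ofLp h⟩)
    have hnw : (‖w‖ : ℂ) ≠ 0 := by exact_mod_cast norm_ne_zero_iff.mpr hw0
    have hnv : (‖vE‖ : ℂ) ≠ 0 := by exact_mod_cast norm_ne_zero_iff.mpr hv0E
    refine ⟨((‖vE‖ : ℂ))⁻¹ • vE, ((‖w‖ : ℂ))⁻¹ • w,
      μ * (((‖vE‖ : ℂ))⁻¹ * (‖w‖ : ℂ)), ((‖vE‖ : ℂ))⁻¹ * (‖w‖ : ℂ),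
      norm_normalize vE hv0E, norm_normalize w hw0, ?_, ?_⟩
    · show A.mulVec (((‖vE‖ : ℂ))⁻¹ • vE) = _
      rw [Matrix.mulVec_smul]
      show (((‖vE‖ : ℂ))⁻¹ : ℂ) • A.mulVec v = _
      rw [hAv, smul_smul, WithLp.ofLp_smul, smul_smul]
      congr 1
      field_simp
    · show B.mulVec (((‖vE‖ : ℂ))⁻¹ • vE) = _
      rw [Matrix.mulVec_smul]
      show (((‖vE‖ : ℂ))⁻¹ : ℂ) • B.mulVec v = _
      rw [WithLp.ofLp_smul, smul_smul]
      congr 1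
      field_simp

lemma exists_basis_extend (x : EuclideanSpace ℂ (Fin (n+1))) (hx : ‖x‖ = 1) :
    ∃ b : OrthonormalBasis (Fin (n+1)) ℂ (EuclideanSpace ℂ (Fin (n+1))), b 0 = x := by
  have card : Module.finrank ℂ (EuclideanSpace ℂ (Fin (n+1))) = Fintype.card (Fin (n+1)) := by
    simp
  have horth : Orthonormal ℂ (({0} : Set (Fin (n+1))).restrict (fun _ => x)) := by
    constructor
    · intro i; exact hx
    · intro i j hij
      exfalso
      apply hij
      have hi := i.2
      have hj := j.2
      simp only [Set.mem_singleton_iff] at hi hj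
      exact Subtype.ext (hi.trans hj.symm)
  obtain ⟨b, hb⟩ := horth.exists_orthonormalBasis_extension_of_card_eq card
  exact ⟨b, hb 0 rfl⟩

/-- Column matrix of an orthonormal basis. -/
def colMatrix {m : ℕ} (b : OrthonormalBasis (Fin m) ℂ (EuclideanSpace ℂ (Fin m))) :
    Matrix (Fin m) (Fin m) ℂ :=
  Matrix.of fun i j => (b j) i

lemma ortho_sum {m : ℕ} (c : OrthonormalBasis (Fin m) ℂ (EuclideanSpace ℂ (Fin m))) (i j : Fin m) :
    ∑ k, (starRingEnd ℂ) (c i k) * c j k = if i = j then 1 else 0 := by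
  have h := orthonormal_iff_ite.mp c.orthonormal i j
  simpa [PiLp.inner_apply, RCLike.inner_apply, mul_comm] using h

lemma colMatrix_unitary {m : ℕ} (b : OrthonormalBasis (Fin m) ℂ (EuclideanSpace ℂ (Fin m))) :
    (colMatrix b)ᴴ * colMatrix b = 1 := by
  ext i j
  rw [Matrix.mul_apply, Matrix.one_apply]
  simp only [conjTranspose_apply, colMatrix, Matrix.of_apply, Complex.star_def]
  exact ortho_sum b i j

lemma sandwich_entry {m : ℕ} (A : Matrix (Fin m) (Fin m) ℂ)
    (b c : OrthonormalBasis (Fin m) ℂ (EuclideanSpace ℂ (Fin m))) (i j : Fin m) :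
    ((colMatrix c)ᴴ * A * colMatrix b) i j
      = ∑ k, (starRingEnd ℂ) (c i k) * (A.mulVec (b j)) k := by
  simp only [Matrix.mul_apply, conjTranspose_apply, colMatrix, Matrix.of_apply,
    Matrix.mulVec, dotProduct, Finset.mul_sum, Finset.sum_mul]
  rw [Finset.sum_comm]
  apply Finset.sum_congr rfl
  intro k _
  apply Finset.sum_congr rfl
  intro l _
  rw [starRingEnd_apply]; ring

/-- Main induction. -/
lemma qz : ∀ (m : ℕ) (A B : Matrix (Fin m) (Fin m) ℂ),
    ∃ U₁ U₂ : Matrix (Fin m) (Fin m) ℂ, U₁ᴴ * U₁ = 1 ∧ U₂ᴴ * U₂ = 1 ∧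
      (∀ i j : Fin m, j < i → (U₂ᴴ * A * U₁) i j = 0) ∧
      (∀ i j : Fin m, j < i → (U₂ᴴ * B * U₁) i j = 0) := by
  intro m
  induction m with
  | zero =>
    intro A B
    exact ⟨1, 1, by simp, by simp, fun i _ _ => i.elim0, fun i _ _ => i.elim0⟩
  | succ n ih =>
    intro A B
    obtain ⟨x, y, α, β, hx, hy, hA, hB⟩ := exists_common A B
    obtain ⟨b, hb⟩ := exists_basis_extend x hx
    obtain ⟨c, hc⟩ := exists_basis_extend y hy
    set U₁ := colMatrix b with hU₁def
    set U₂ := colMatrix c with hU₂def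
    have hU₁ : U₁ᴴ * U₁ = 1 := colMatrix_unitary b
    have hU₂ : U₂ᴴ * U₂ = 1 := colMatrix_unitary c
    have hcol : ∀ (C : Matrix (Fin (n+1)) (Fin (n+1)) ℂ) (γ : ℂ), C.mulVec x = γ • y →
        ∀ i : Fin n, (U₂ᴴ * C * U₁) i.succ 0 = 0 := by
      intro C γ hC i
      rw [hU₁def, hU₂def, sandwich_entry C b c i.succ 0, hb, hC, ← hc]
      calc ∑ k, (starRingEnd ℂ) (c i.succ k) * ((γ • c 0) k)
          = γ * ∑ k, (starRingEnd ℂ) (c i.succ k) * (c 0 k) := by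
            rw [Finset.mul_sum]
            apply Finset.sum_congr rfl
            intro k _
            simp only [PiLp.smul_apply, smul_eq_mul]
            ring
        _ = 0 := by rw [ortho_sum c]; simp [Fin.succ_ne_zero]
    set M₁ := U₂ᴴ * A * U₁ with hM₁
    set M₂ := U₂ᴴ * B * U₁ with hM₂
    obtain ⟨V₁, V₂, hV₁, hV₂, hT₁, hT₂⟩ :=
      ih (M₁.submatrix Fin.succ Fin.succ) (M₂.submatrix Fin.succ Fin.succ)
    have hsand : ∀ C : Matrix (Fin (n+1)) (Fin (n+1)) ℂ,
        (U₂ * dilate V₂)ᴴ * C * (U₁ * dilate V₁)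
          = dilate V₂ᴴ * (U₂ᴴ * C * U₁) * dilate V₁ := by
      intro C
      rw [conjTranspose_mul, dilate_conjTranspose]
      simp only [Matrix.mul_assoc]
    have huni : ∀ (U : Matrix (Fin (n+1)) (Fin (n+1)) ℂ) (V : Matrix (Fin n) (Fin n) ℂ),
        Uᴴ * U = 1 → Vᴴ * V = 1 →
        (U * dilate V)ᴴ * (U * dilate V) = 1 := by
      intro U V hU hV
      rw [conjTranspose_mul, Matrix.mul_assoc, ← Matrix.mul_assoc Uᴴ U (dilate V), hU,
        Matrix.one_mul, dilate_conjTranspose, dilate_mul, hV, dilate_one]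
    refine ⟨U₁ * dilate V₁, U₂ * dilate V₂, huni U₁ V₁ hU₁ hV₁, huni U₂ V₂ hU₂ hV₂, ?_, ?_⟩
    · intro i j hij
      rw [hsand A, ← hM₁]
      cases i using Fin.cases with
      | zero => exact absurd hij (Fin.not_lt_zero j)
      | succ i' =>
        cases j using Fin.cases with
        | zero => exact dilate_sandwich_sz M₁ V₁ V₂ (hcol A α hA) i'
        | succ j' =>
          rw [dilate_sandwich_ss]
          exact hT₁ i' j' (Fin.succ_lt_succ_iff.mp hij)
    · intro i j hij
      rw [hsand B, ← hM₂]
      cases i using Fin.cases with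
      | zero => exact absurd hij (Fin.not_lt_zero j)
      | succ i' =>
        cases j using Fin.cases with
        | zero => exact dilate_sandwich_sz M₂ V₁ V₂ (hcol B β hB) i'
        | succ j' =>
          rw [dilate_sandwich_ss]
          exact hT₂ i' j' (Fin.succ_lt_succ_iff.mp hij)

end
end QZAux

/-- Complex generalized Schur (QZ) decomposition of a matrix pencil. -/
theorem complex_generalized_schur_decomposition (n : ℕ) (A B : Matrix (Fin n) (Fin n) ℂ) :
    ∃ U₁ U₂ : Matrix (Fin n) (Fin n) ℂ, U₁ᴴ * U₁ = 1 ∧ U₂ᴴ * U₂ = 1 ∧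
      (∀ i j : Fin n, j < i → (U₂ᴴ * A * U₁) i j = 0) ∧
      (∀ i j : Fin n, j < i → (U₂ᴴ * B * U₁) i j = 0) := by
  exact QZAux.qz n A B
end

section
/- Let r ≥ 1 and let A₁, …, A_r be complex n×n matrices. There exist unitary n×n matrices U₁, …, U_r such that, with indices taken cyclically (U_{r+1} := U₁), the matrix U_{i+1}ᴴ A_i U_i is upper triangular for every i = 1, …, r. -/
open Matrix
open Fin.NatCast

namespace PeriodicSchurAux

section

set_option linter.unusedSectionVars false
set_option maxHeartbeats 800000
variable {r m : ℕ} [NeZero r] [NeZero m]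

lemma fin_add_one_val (i : Fin r) : ((i + 1 : Fin r) : ℕ) = ((i : ℕ) + 1) % r := by
  rw [Fin.add_def, Fin.val_one']
  conv_rhs => rw [Nat.add_mod, Nat.mod_eq_of_lt i.isLt]

lemma fin_sub_one_val (x : Fin r) (hx : x ≠ 0) : ((x - 1 : Fin r) : ℕ) = (x : ℕ) - 1 := by
  have hx1 : 1 ≤ (x : ℕ) := Nat.pos_of_ne_zero (fun h => hx (Fin.ext h))
  have hr2 : 2 ≤ r := by
    by_contra h
    have hr1 : r = 1 := by have := NeZero.ne r; omega
    subst hr1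
    have := x.isLt; omega
  rw [Fin.sub_def]
  simp only [Fin.val_one']
  rw [Nat.mod_eq_of_lt (by omega : (1:ℕ) < r)]
  have h1 : r - 1 + (x : ℕ) = ((x:ℕ) - 1) + r := by omega
  rw [h1, Nat.add_mod_right, Nat.mod_eq_of_lt (by have := x.isLt; omega)]

lemma step_lemma (A : Matrix (Fin m) (Fin m) ℂ) (t : Fin m → ℂ) (ht : t ≠ 0) :
    ∃ v : Fin m → ℂ, v ≠ 0 ∧ ∃ μ : ℂ, A *ᵥ v = μ • t := by
  by_cases h : IsUnit A.det
  · refine ⟨A⁻¹ *ᵥ t, ?_, 1, ?_⟩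
    · intro h0
      apply ht
      have h2 : A *ᵥ (A⁻¹ *ᵥ t) = t := by
        rw [Matrix.mulVec_mulVec, Matrix.mul_nonsing_inv _ h, Matrix.one_mulVec]
      rw [h0, Matrix.mulVec_zero] at h2
      exact h2.symm
    · rw [Matrix.mulVec_mulVec, Matrix.mul_nonsing_inv _ h, Matrix.one_mulVec, one_smul]
  · obtain ⟨v, hv, hAv⟩ := (Matrix.exists_mulVec_eq_zero_iff).2 (by
      by_contra hd; exact h (isUnit_iff_ne_zero.2 hd))
    exact ⟨v, hv, 0, by rw [hAv, zero_smul]⟩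

noncomputable def backSeq (A : Fin r → Matrix (Fin m) (Fin m) ℂ) (j : Fin r)
    (w0 : {v : Fin m → ℂ // v ≠ 0}) : ℕ → {v : Fin m → ℂ // v ≠ 0}
  | 0 => w0
  | (k+1) =>
    ⟨(step_lemma (A (j - ((k:ℕ)+1 : ℕ))) (backSeq A j w0 k).1 (backSeq A j w0 k).2).choose,
     (step_lemma (A (j - ((k:ℕ)+1 : ℕ))) (backSeq A j w0 k).1 (backSeq A j w0 k).2).choose_spec.1⟩

lemma backSeq_spec (A : Fin r → Matrix (Fin m) (Fin m) ℂ) (j : Fin r)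
    (w0 : {v : Fin m → ℂ // v ≠ 0}) (k : ℕ) :
    ∃ μ : ℂ, A (j - ((k:ℕ)+1 : ℕ)) *ᵥ (backSeq A j w0 (k+1)).1 = μ • (backSeq A j w0 k).1 :=
  (step_lemma (A (j - ((k:ℕ)+1 : ℕ))) (backSeq A j w0 k).1 (backSeq A j w0 k).2).choose_spec.2

noncomputable def fwdMap (A : Fin r → Matrix (Fin m) (Fin m) ℂ) : ℕ → ((Fin m → ℂ) →ₗ[ℂ] (Fin m → ℂ))
  | 0 => LinearMap.id
  | (k+1) => (Matrix.mulVecLin (A (k : ℕ))).comp (fwdMap A k)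

lemma fwdMap_inj (A : Fin r → Matrix (Fin m) (Fin m) ℂ) (hA : ∀ i, IsUnit (A i).det) (k : ℕ) :
    Function.Injective (fwdMap A k) := by
  induction k with
  | zero => exact fun x y h => h
  | succ k ih =>
    have hinj : Function.Injective (Matrix.mulVecLin (A (k : Fin r))) := by
      intro x y h
      have h2 := congrArg (fun z => (A (k : Fin r))⁻¹ *ᵥ z) h
      simpa [Matrix.mulVec_mulVec, Matrix.nonsing_inv_mul _ (hA _), Matrix.one_mulVec] using h2
    exact hinj.comp ih

lemma exists_cycle_vec (A : Fin r → Matrix (Fin m) (Fin m) ℂ) :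
    ∃ (v : Fin r → (Fin m → ℂ)) (μ : Fin r → ℂ),
      (∀ i, v i ≠ 0) ∧ ∀ i, (A i) *ᵥ v i = μ i • v (i + 1) := by
  by_cases hall : ∀ i, IsUnit (A i).det
  · obtain ⟨c, hc⟩ := Module.End.exists_eigenvalue (fwdMap A r)
    obtain ⟨v0, hv0⟩ := hc.exists_hasEigenvector
    have hv0ne : v0 ≠ 0 := hv0.right
    have happ : fwdMap A r v0 = c • v0 := hv0.apply_eq_smul
    refine ⟨fun i => fwdMap A (i : ℕ) v0, fun i => if ((i:ℕ)+1 = r) then c else 1, ?_, ?_⟩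
    · intro i h0
      exact hv0ne (fwdMap_inj A hall (i:ℕ) (by simpa using h0))
    · intro i
      have hAv : A i *ᵥ (fwdMap A (i:ℕ) v0) = fwdMap A ((i:ℕ)+1) v0 := by
        show _ = ((Matrix.mulVecLin (A (((i:ℕ) : ℕ) : Fin r))).comp (fwdMap A (i:ℕ))) v0
        simp [Matrix.mulVecLin_apply]
      by_cases hlast : (i:ℕ)+1 = r
      · have h1 : ((i+1 : Fin r) : ℕ) = 0 := by rw [fin_add_one_val, hlast, Nat.mod_self]
        show A i *ᵥ fwdMap A (i:ℕ) v0 =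
          (if ((i:ℕ)+1 = r) then c else 1) • (fwdMap A ((i+1 : Fin r):ℕ)) v0
        rw [hAv, if_pos hlast, h1, hlast, happ]
        rfl
      · have h1 : ((i+1 : Fin r) : ℕ) = (i:ℕ)+1 := by
          rw [fin_add_one_val, Nat.mod_eq_of_lt (by have := i.isLt; omega)]
        show A i *ᵥ fwdMap A (i:ℕ) v0 =
          (if ((i:ℕ)+1 = r) then c else 1) • (fwdMap A ((i+1 : Fin r):ℕ)) v0
        rw [hAv, if_neg hlast, one_smul, h1]
  · push_neg at hall
    obtain ⟨j, hj⟩ := hall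
    have hdet : (A j).det = 0 := by
      by_contra h; exact hj (isUnit_iff_ne_zero.2 h)
    obtain ⟨w0, hw0ne, hw0⟩ := (Matrix.exists_mulVec_eq_zero_iff).2 hdet
    set g := backSeq A j ⟨w0, hw0ne⟩ with hg
    have key : ∀ i, ∃ μ : ℂ,
        A i *ᵥ (g ((j - i : Fin r) : ℕ)).1 = μ • (g ((j - (i+1) : Fin r) : ℕ)).1 := by
      intro i
      by_cases hij : i = j
      · subst hij
        have h0 : ((i - i : Fin r) : ℕ) = 0 := by simp
        refine ⟨0, ?_⟩
        rw [h0]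
        show A i *ᵥ w0 = _
        rw [hw0, zero_smul]
      · have hne : (j - i : Fin r) ≠ 0 := by
          intro h
          exact hij (sub_eq_zero.1 h).symm
        set k := ((j - i : Fin r) : ℕ) with hk
        have hk1 : 1 ≤ k := Nat.pos_of_ne_zero (fun h => hne (Fin.ext h))
        obtain ⟨μ, hμ⟩ := backSeq_spec A j ⟨w0, hw0ne⟩ (k-1)
        have hkk : k - 1 + 1 = k := by omega
        rw [hkk] at hμ
        have hcast : ((k:ℕ) : Fin r) = j - i := by rw [hk]; exact Fin.cast_val_eq_self _
        rw [hcast, sub_sub_cancel] at hμ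
        have hnext : ((j - (i+1) : Fin r) : ℕ) = k - 1 := by
          have h2 : j - (i+1) = (j - i) - 1 := by rw [sub_add_eq_sub_sub]
          rw [h2, fin_sub_one_val _ hne, ← hk]
        rw [hnext]
        exact ⟨μ, hμ⟩
    choose μ hμ using key
    exact ⟨fun i => (g ((j - i : Fin r) : ℕ)).1, μ, fun i => (g _).2, hμ⟩

end

section

set_option linter.unusedSectionVars false
variable {n m : ℕ} [NeZero m]

lemma exists_unitary_firstCol (v : Fin m → ℂ) (hv : v ≠ 0) :
    ∃ (W : Matrix (Fin m) (Fin m) ℂ) (c : ℂ), c ≠ 0 ∧ Wᴴ * W = 1 ∧ ∀ p, W p 0 = c * v p := by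
  set vE : EuclideanSpace ℂ (Fin m) := WithLp.toLp 2 v with hvE
  have hvE0 : vE ≠ 0 := by simpa [vE] using hv
  have hnorm : ‖(‖vE‖ : ℂ)⁻¹ • vE‖ = 1 := norm_smul_inv_norm hvE0
  set u : EuclideanSpace ℂ (Fin m) := (‖vE‖ : ℂ)⁻¹ • vE with hu
  have hcard : Module.finrank ℂ (EuclideanSpace ℂ (Fin m)) = Fintype.card (Fin m) := by simp
  have horth : Orthonormal ℂ (({0} : Set (Fin m)).restrict (fun _ => u)) := by
    constructor
    · intro i; exact hnorm
    · intro i j hij; exact absurd (Subsingleton.elim i j) hij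
  obtain ⟨b, hb⟩ := horth.exists_orthonormalBasis_extension_of_card_eq hcard
  refine ⟨Matrix.of fun p q => b q p, (‖vE‖ : ℂ)⁻¹, ?_, ?_, ?_⟩
  · simp only [ne_eq, inv_eq_zero, Complex.ofReal_eq_zero, norm_eq_zero]
    exact hvE0
  · ext i j
    have horth2 := b.orthonormal
    rw [orthonormal_iff_ite] at horth2
    have h := horth2 i j
    simp only [PiLp.inner_apply, RCLike.inner_apply] at h
    simp only [Matrix.mul_apply, conjTranspose_apply, Matrix.of_apply, Matrix.one_apply]
    rw [← h]
    refine Finset.sum_congr rfl fun _ _ => ?_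
    rw [mul_comm]
    rfl
  · intro p
    have hb0 : b 0 = u := hb 0 rfl
    simp only [Matrix.of_apply, hb0]
    rfl

def ext1 (V : Matrix (Fin n) (Fin n) ℂ) : Matrix (Fin (n+1)) (Fin (n+1)) ℂ :=
  Matrix.of fun p q =>
    Fin.cases (Fin.cases 1 (fun _ => 0) q) (fun p' => Fin.cases 0 (fun q' => V p' q') q) p

variable (V : Matrix (Fin n) (Fin n) ℂ)

@[simp] lemma ext1_zero_zero : ext1 V 0 0 = 1 := rfl
@[simp] lemma ext1_zero_succ (q : Fin n) : ext1 V 0 q.succ = 0 := by simp [ext1]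
@[simp] lemma ext1_succ_zero (p : Fin n) : ext1 V p.succ 0 = 0 := by simp [ext1]
@[simp] lemma ext1_succ_succ (p q : Fin n) : ext1 V p.succ q.succ = V p q := by simp [ext1]

lemma ext1_unitary (hV : Vᴴ * V = 1) : (ext1 V)ᴴ * ext1 V = 1 := by
  ext p q
  rw [Matrix.mul_apply]
  simp only [conjTranspose_apply]
  rw [Fin.sum_univ_succ]
  induction p using Fin.cases with
  | zero =>
    induction q using Fin.cases with
    | zero => simp [Matrix.one_apply]
    | succ q' => simp [Matrix.one_apply, (Fin.succ_ne_zero q').symm]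
  | succ p' =>
    induction q using Fin.cases with
    | zero => simp [Matrix.one_apply, (Fin.succ_ne_zero p').symm, Fin.succ_ne_zero]
    | succ q' =>
      have h := congrFun (congrFun hV p') q'
      simp only [Matrix.mul_apply, conjTranspose_apply] at h
      simp only [ext1_zero_succ, ext1_succ_succ, star_zero, zero_mul, zero_add]
      rw [h]
      simp [Matrix.one_apply, Fin.succ_inj]

end

section

set_option linter.unusedSectionVars false
variable {r : ℕ} [NeZero r]

theorem aux : ∀ (n : ℕ) (A : Fin r → Matrix (Fin n) (Fin n) ℂ),
    ∃ U : Fin r → Matrix (Fin n) (Fin n) ℂ, (∀ i, (U i)ᴴ * U i = 1) ∧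
      ∀ i : Fin r, ∀ p q, q < p → ((U (i+1))ᴴ * A i * U i) p q = 0 := by
  intro n
  induction n with
  | zero =>
    intro A
    exact ⟨fun _ => 1, by simp, fun i p q _ => p.elim0⟩
  | succ n ih =>
    intro A
    obtain ⟨v, μ, hvne, hv⟩ := exists_cycle_vec A
    choose W c hc hWu hWc using fun i => exists_unitary_firstCol (v i) (hvne i)
    set B : Fin r → Matrix (Fin (n+1)) (Fin (n+1)) ℂ := fun i => (W (i+1))ᴴ * A i * W i with hB
    -- column-0 lemma: multiplying by W i on the right and taking col 0
    have col0 : ∀ (M : Matrix (Fin (n+1)) (Fin (n+1)) ℂ) (i : Fin r) (p : Fin (n+1)),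
        (M * W i) p 0 = c i * (M *ᵥ v i) p := by
      intro M i p
      rw [Matrix.mul_apply]
      simp only [hWc]
      rw [Matrix.mulVec, dotProduct, Finset.mul_sum]
      congr 1; ext b; ring
    have hWcol : ∀ i p, ((W i)ᴴ *ᵥ v i) p = (c i)⁻¹ * (1 : Matrix (Fin (n+1)) (Fin (n+1)) ℂ) p 0 := by
      intro i p
      have h1 : ((W i)ᴴ * W i) p 0 = c i * ((W i)ᴴ *ᵥ v i) p := col0 _ i p
      rw [hWu i] at h1
      field_simp [hc i]
      rw [h1]; ring
    have hBcol : ∀ i p, p ≠ 0 → B i p 0 = 0 := by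
      intro i p hp
      have h1 : B i p 0 = c i * (((W (i+1))ᴴ * A i) *ᵥ v i) p := col0 _ i p
      rw [← Matrix.mulVec_mulVec, hv i, Matrix.mulVec_smul] at h1
      have h2 : ((W (i+1))ᴴ *ᵥ v (i+1)) p = (c (i+1))⁻¹ * (1 : Matrix (Fin (n+1)) (Fin (n+1)) ℂ) p 0 :=
        hWcol (i+1) p
      rw [h1]
      show c i * (μ i * ((W (i+1))ᴴ *ᵥ v (i+1)) p) = 0
      rw [h2, Matrix.one_apply_ne hp]
      ring
    obtain ⟨V, hVu, hVt⟩ := ih (fun i => (B i).submatrix Fin.succ Fin.succ)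
    refine ⟨fun i => W i * ext1 (V i), ?_, ?_⟩
    · intro i
      rw [Matrix.conjTranspose_mul, Matrix.mul_assoc, ← Matrix.mul_assoc (W i)ᴴ, hWu,
        Matrix.one_mul, ext1_unitary _ (hVu i)]
    · intro i p q hqp
      have hT : ((W (i+1) * ext1 (V (i+1)))ᴴ * A i * (W i * ext1 (V i))) p q
          = ((ext1 (V (i+1)))ᴴ * (B i * ext1 (V i))) p q := by
        rw [hB, Matrix.conjTranspose_mul]
        simp only [Matrix.mul_assoc]
      rw [hT, Matrix.mul_apply]
      -- inner factor entries
      have hin0 : ∀ a, (B i * ext1 (V i)) a 0 = B i a 0 := by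
        intro a
        rw [Matrix.mul_apply, Fin.sum_univ_succ]
        simp [ext1_zero_zero, ext1_succ_zero]
      have hins : ∀ a q', (B i * ext1 (V i)) a q'.succ
          = ∑ b', B i a b'.succ * V i b' q' := by
        intro a q'
        rw [Matrix.mul_apply, Fin.sum_univ_succ]
        simp [ext1_zero_succ, ext1_succ_succ]
      induction q using Fin.cases with
      | zero =>
        induction p using Fin.cases with
        | zero => exact absurd hqp (lt_irrefl _)
        | succ p' =>
          rw [Fin.sum_univ_succ]
          simp only [conjTranspose_apply, ext1_zero_succ, star_zero, zero_mul, zero_add, hin0]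
          apply Finset.sum_eq_zero
          intro a _
          rw [hBcol i a.succ (Fin.succ_ne_zero a)]
          ring
      | succ q' =>
        induction p using Fin.cases with
        | zero => exact absurd hqp (by simp [Fin.lt_iff_val_lt_val])
        | succ p' =>
          rw [Fin.sum_univ_succ]
          simp only [conjTranspose_apply, ext1_zero_succ, star_zero, zero_mul, zero_add,
            hins, ext1_succ_succ]
          have hq'p' : q' < p' := by
            rwa [Fin.lt_iff_val_lt_val, Fin.val_succ, Fin.val_succ, Nat.add_lt_add_iff_right]
              at hqp
          have h0 := hVt i p' q' hq'p'
          rw [Matrix.mul_assoc, Matrix.mul_apply] at h0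
          rw [← h0]
          simp only [conjTranspose_apply, Matrix.mul_apply, Matrix.submatrix_apply]

end

end PeriodicSchurAux

/-- Complex periodic Schur decomposition: for matrices `A 0, …, A (r-1)` associated with a
cycle, there are unitary matrices `U 0, …, U (r-1)` (indices taken cyclically) such that each
`(U (i+1 mod r))ᴴ * A i * U i` is upper triangular. -/
theorem complex_periodic_schur_decomposition (n r : ℕ) (hr : 1 ≤ r)
    (A : Fin r → Matrix (Fin n) (Fin n) ℂ) :
    ∃ U : Fin r → Matrix (Fin n) (Fin n) ℂ,
      (∀ i, (U i)ᴴ * U i = 1) ∧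
      ∀ i : Fin r, ∀ p q : Fin n, q < p →
        ((U ⟨((i : ℕ) + 1) % r, Nat.mod_lt _ hr⟩)ᴴ * A i * U i) p q = 0 := by
  haveI : NeZero r := ⟨by omega⟩
  obtain ⟨U, hU1, hU2⟩ := PeriodicSchurAux.aux n A
  refine ⟨U, hU1, ?_⟩
  intro i p q hqp
  have hidx : (⟨((i : ℕ) + 1) % r, Nat.mod_lt _ hr⟩ : Fin r) = i + 1 :=
    Fin.ext (PeriodicSchurAux.fin_add_one_val i).symm
  rw [hidx]
  exact hU2 i p q hqp
end

section
/- For every pair of complex n×n matrices A and B there exist unitary n×n matrices U₁ and U₂ such that U₂ᴴ A U₁ and U₁ᴴ B U₂ are both upper triangular. -/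
open Matrix

lemma exists_unitary_col (n : ℕ) (x : Fin (n+1) → ℂ) (hx : x ≠ 0) :
    ∃ V : Matrix (Fin (n+1)) (Fin (n+1)) ℂ, Vᴴ * V = 1 ∧
      ∃ c : ℂ, c ≠ 0 ∧ ∀ i, V i 0 = c * x i := by
  let E := EuclideanSpace ℂ (Fin (n+1))
  let xE : E := WithLp.toLp 2 x
  have hxE : xE ≠ 0 := fun h => hx (by simpa [xE] using congrArg WithLp.ofLp h)
  have hnx : ‖xE‖ ≠ 0 := norm_ne_zero_iff.mpr hxE
  let u : E := (‖xE‖⁻¹ : ℝ) • xE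
  have hu : ‖u‖ = 1 := by
    simp [u, norm_smul, abs_of_nonneg (norm_nonneg xE), inv_mul_cancel₀ hnx]
  have hcard : Module.finrank ℂ E = Fintype.card (Fin (n+1)) := by simp [E]
  have horth : Orthonormal ℂ (({0} : Set (Fin (n+1))).restrict (fun _ => u)) := by
    constructor
    · intro i; exact hu
    · intro i j hij
      exact absurd (Subtype.ext ((i.2.trans j.2.symm : (i : Fin (n+1)) = j))) hij
  obtain ⟨b, hb⟩ := horth.exists_orthonormalBasis_extension_of_card_eq hcard
  have hb0 : b 0 = u := hb 0 rfl
  let V : Matrix (Fin (n+1)) (Fin (n+1)) ℂ :=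
    (EuclideanSpace.basisFun (Fin (n+1)) ℂ).toBasis.toMatrix ⇑b
  have hmem := (EuclideanSpace.basisFun (Fin (n+1)) ℂ).toMatrix_orthonormalBasis_mem_unitary b
  have hVij : ∀ i j, V i j = b j i := by
    intro i j
    simp [V, Module.Basis.toMatrix_apply, EuclideanSpace.basisFun]
  refine ⟨V, ?_, (‖xE‖⁻¹ : ℝ), by simpa using hnx, ?_⟩
  · exact (Unitary.mem_iff.mp hmem).1
  · intro i
    rw [hVij i 0, hb0]
    show ((‖xE‖⁻¹ : ℝ) • (WithLp.toLp 2 x : EuclideanSpace ℂ (Fin (n+1)))).ofLp i = _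
    rw [WithLp.ofLp_smul, WithLp.ofLp_toLp, Pi.smul_apply, Complex.real_smul]

lemma exists_coupled_pair (n : ℕ) (A B : Matrix (Fin (n+1)) (Fin (n+1)) ℂ) :
    ∃ x y : Fin (n+1) → ℂ, x ≠ 0 ∧ y ≠ 0 ∧
      (∃ α : ℂ, A *ᵥ x = α • y) ∧ (∃ β : ℂ, B *ᵥ y = β • x) := by
  obtain ⟨μ, hμ⟩ := Module.End.exists_eigenvalue ((B * A).mulVecLin)
  obtain ⟨x, hx⟩ := hμ.exists_hasEigenvector
  have hxne : x ≠ 0 := hx.2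
  have hBA : (B * A) *ᵥ x = μ • x := hx.apply_eq_smul
  by_cases hAx : A *ᵥ x = 0
  · -- find y ≠ 0 with B *ᵥ y ∈ span {x}
    let p : Submodule ℂ (Fin (n+1) → ℂ) := Submodule.span ℂ {x}
    let g : (Fin (n+1) → ℂ) →ₗ[ℂ] ((Fin (n+1) → ℂ) ⧸ p) := p.mkQ.comp B.mulVecLin
    have hnotinj : ¬ Function.Injective g := by
      intro hinj
      have h1 : Module.finrank ℂ (Fin (n+1) → ℂ) ≤ Module.finrank ℂ ((Fin (n+1) → ℂ) ⧸ p) :=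
        LinearMap.finrank_le_finrank_of_injective hinj
      have h2 : Module.finrank ℂ ((Fin (n+1) → ℂ) ⧸ p) + Module.finrank ℂ p
          = Module.finrank ℂ (Fin (n+1) → ℂ) := Submodule.finrank_quotient_add_finrank p
      have h3 : Module.finrank ℂ p = 1 := finrank_span_singleton hxne
      have h4 : Module.finrank ℂ (Fin (n+1) → ℂ) = n + 1 := by simp
      omega
    rw [← LinearMap.ker_eq_bot] at hnotinj
    obtain ⟨y, hyker, hyne⟩ := Submodule.exists_mem_ne_zero_of_ne_bot hnotinj
    have hBy : B *ᵥ y ∈ p := by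
      have := (LinearMap.mem_ker).mp hyker
      simpa [g, Submodule.Quotient.mk_eq_zero] using this
    obtain ⟨β, hβ⟩ := Submodule.mem_span_singleton.mp hBy
    exact ⟨x, y, hxne, hyne, ⟨0, by simp [hAx]⟩, ⟨β, hβ.symm⟩⟩
  · refine ⟨x, A *ᵥ x, hxne, hAx, ⟨1, (one_smul _ _).symm⟩, ⟨μ, ?_⟩⟩
    rw [Matrix.mulVec_mulVec, hBA]

def ext1 {n : ℕ} (W : Matrix (Fin n) (Fin n) ℂ) : Matrix (Fin (n+1)) (Fin (n+1)) ℂ :=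
  Matrix.of fun i j =>
    Fin.cases (Fin.cases (1 : ℂ) (fun _ => 0) j)
      (fun i' => Fin.cases (0 : ℂ) (fun j' => W i' j') j) i

@[simp] lemma ext1_zero_zero {n} (W : Matrix (Fin n) (Fin n) ℂ) : ext1 W 0 0 = 1 := rfl
@[simp] lemma ext1_zero_succ {n} (W : Matrix (Fin n) (Fin n) ℂ) (j : Fin n) :
    ext1 W 0 j.succ = 0 := rfl
@[simp] lemma ext1_succ_zero {n} (W : Matrix (Fin n) (Fin n) ℂ) (i : Fin n) :
    ext1 W i.succ 0 = 0 := rfl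
@[simp] lemma ext1_succ_succ {n} (W : Matrix (Fin n) (Fin n) ℂ) (i j : Fin n) :
    ext1 W i.succ j.succ = W i j := rfl

lemma ext1_conjTranspose {n} (W : Matrix (Fin n) (Fin n) ℂ) :
    (ext1 W)ᴴ = ext1 Wᴴ := by
  ext i j
  refine Fin.cases ?_ (fun i' => ?_) i <;> refine Fin.cases ?_ (fun j' => ?_) j <;>
    simp [Matrix.conjTranspose_apply]

lemma ext1_mul {n} (X W : Matrix (Fin n) (Fin n) ℂ) :
    ext1 X * ext1 W = ext1 (X * W) := by
  ext i j
  refine Fin.cases ?_ (fun i' => ?_) i <;> refine Fin.cases ?_ (fun j' => ?_) j <;>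
    simp [Matrix.mul_apply, Fin.sum_univ_succ]

lemma ext1_one {n} : ext1 (1 : Matrix (Fin n) (Fin n) ℂ) = 1 := by
  ext i j
  refine Fin.cases ?_ (fun i' => ?_) i <;> refine Fin.cases ?_ (fun j' => ?_) j <;>
    simp [Matrix.one_apply, Fin.succ_ne_zero, (Fin.succ_ne_zero _).symm, Fin.succ_inj]

lemma ext1_sandwich_succ_zero {n} (X W : Matrix (Fin n) (Fin n) ℂ)
    (M : Matrix (Fin (n+1)) (Fin (n+1)) ℂ) (i : Fin n) :
    (ext1 X * M * ext1 W) i.succ 0 = ∑ k, X i k * M k.succ 0 := by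
  simp [Matrix.mul_apply, Fin.sum_univ_succ, Finset.sum_mul]

lemma ext1_sandwich_succ_succ {n} (X W : Matrix (Fin n) (Fin n) ℂ)
    (M : Matrix (Fin (n+1)) (Fin (n+1)) ℂ) (i j : Fin n) :
    (ext1 X * M * ext1 W) i.succ j.succ
      = (X * (M.submatrix Fin.succ Fin.succ) * W) i j := by
  simp [Matrix.mul_apply, Fin.sum_univ_succ, Finset.sum_mul]

lemma col_zero_aux {n : ℕ} (A V₁ V₂ : Matrix (Fin (n+1)) (Fin (n+1)) ℂ)
    (x y : Fin (n+1) → ℂ) (c₁ c₂ α : ℂ) (hc₂ : c₂ ≠ 0)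
    (h1 : ∀ i, V₁ i 0 = c₁ * x i) (h2 : ∀ i, V₂ i 0 = c₂ * y i)
    (hA : A *ᵥ x = α • y) (hV₂ : V₂ᴴ * V₂ = 1) :
    ∀ i : Fin n, (V₂ᴴ * A * V₁) i.succ 0 = 0 := by
  have hAV : ∀ l, (A * V₁) l 0 = (c₁ * α * c₂⁻¹) * V₂ l 0 := by
    intro l
    have e1 : (A * V₁) l 0 = c₁ * ∑ m, A l m * x m := by
      rw [Matrix.mul_apply, Finset.mul_sum]
      exact Finset.sum_congr rfl fun m _ => by rw [h1]; ring
    have e2 : ∑ m, A l m * x m = α * y l := by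
      simpa [Matrix.mulVec, dotProduct] using congrFun hA l
    rw [e1, e2, h2]
    field_simp
  intro i
  have key : (V₂ᴴ * (A * V₁)) i.succ 0 = (c₁ * α * c₂⁻¹) * (V₂ᴴ * V₂) i.succ 0 := by
    simp only [Matrix.mul_apply, Matrix.conjTranspose_apply, hAV, Finset.mul_sum]
    exact Finset.sum_congr rfl fun l _ => by ring
  rw [Matrix.mul_assoc, key, hV₂, Matrix.one_apply_ne (Fin.succ_ne_zero i), mul_zero]

/-- Contragredient (period-2 cycle) complex Schur decomposition. -/
theorem complex_contragredient_schur (n : ℕ) (A B : Matrix (Fin n) (Fin n) ℂ) :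
    ∃ U₁ U₂ : Matrix (Fin n) (Fin n) ℂ, U₁ᴴ * U₁ = 1 ∧ U₂ᴴ * U₂ = 1 ∧
      (∀ i j : Fin n, j < i → (U₂ᴴ * A * U₁) i j = 0) ∧
      (∀ i j : Fin n, j < i → (U₁ᴴ * B * U₂) i j = 0) := by
  induction n with
  | zero =>
    exact ⟨1, 1, by simp, by simp, fun i => i.elim0, fun i => i.elim0⟩
  | succ n ih =>
    obtain ⟨x, y, hx, hy, ⟨α, hA⟩, ⟨β, hB⟩⟩ := exists_coupled_pair n A B
    obtain ⟨V₁, hV₁u, c₁, hc₁, hV₁col⟩ := exists_unitary_col n x hx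
    obtain ⟨V₂, hV₂u, c₂, hc₂, hV₂col⟩ := exists_unitary_col n y hy
    have hAcol := col_zero_aux A V₁ V₂ x y c₁ c₂ α hc₂ hV₁col hV₂col hA hV₂u
    have hBcol := col_zero_aux B V₂ V₁ y x c₂ c₁ β hc₁ hV₂col hV₁col hB hV₁u
    set A' := V₂ᴴ * A * V₁ with hA'
    set B' := V₁ᴴ * B * V₂ with hB'
    obtain ⟨W₁, W₂, hW₁u, hW₂u, hWA, hWB⟩ :=
      ih (A'.submatrix Fin.succ Fin.succ) (B'.submatrix Fin.succ Fin.succ)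
    refine ⟨V₁ * ext1 W₁, V₂ * ext1 W₂, ?_, ?_, ?_, ?_⟩
    · rw [Matrix.conjTranspose_mul, Matrix.mul_assoc, ← Matrix.mul_assoc V₁ᴴ, hV₁u,
        Matrix.one_mul, ext1_conjTranspose, ext1_mul, hW₁u, ext1_one]
    · rw [Matrix.conjTranspose_mul, Matrix.mul_assoc, ← Matrix.mul_assoc V₂ᴴ, hV₂u,
        Matrix.one_mul, ext1_conjTranspose, ext1_mul, hW₂u, ext1_one]
    · have hre : (V₂ * ext1 W₂)ᴴ * A * (V₁ * ext1 W₁) = ext1 W₂ᴴ * A' * ext1 W₁ := by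
        rw [Matrix.conjTranspose_mul, ext1_conjTranspose, hA']
        simp only [Matrix.mul_assoc]
      rw [hre]
      intro i j hij
      rcases Fin.eq_succ_of_ne_zero (i := i) (Fin.pos_iff_ne_zero.mp (lt_of_le_of_lt j.zero_le hij)) with ⟨i', rfl⟩
      refine Fin.cases (fun _ => ?_) (fun j' hij => ?_) j hij
      · rw [ext1_sandwich_succ_zero]
        exact Finset.sum_eq_zero fun k _ => by rw [hAcol k, mul_zero]
      · rw [ext1_sandwich_succ_succ]
        exact hWA i' j' (by rwa [Fin.succ_lt_succ_iff] at hij)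
    · have hre : (V₁ * ext1 W₁)ᴴ * B * (V₂ * ext1 W₂) = ext1 W₁ᴴ * B' * ext1 W₂ := by
        rw [Matrix.conjTranspose_mul, ext1_conjTranspose, hB']
        simp only [Matrix.mul_assoc]
      rw [hre]
      intro i j hij
      rcases Fin.eq_succ_of_ne_zero (i := i) (Fin.pos_iff_ne_zero.mp (lt_of_le_of_lt j.zero_le hij)) with ⟨i', rfl⟩
      refine Fin.cases (fun _ => ?_) (fun j' hij => ?_) j hij
      · rw [ext1_sandwich_succ_zero]
        exact Finset.sum_eq_zero fun k _ => by rw [hBcol k, mul_zero]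
      · rw [ext1_sandwich_succ_succ]
        exact hWB i' j' (by rwa [Fin.succ_lt_succ_iff] at hij)
end

section
/- Let k ≥ 1 and let A₁, …, A_k be complex n×n matrices. There exist unitary n×n matrices U₁, …, U_{k+1} such that U_{i+1}ᴴ A_i U_i is upper triangular for every i = 1, …, k. -/
open Matrix

lemma qr_exists (n : ℕ) (M : Matrix (Fin n) (Fin n) ℂ) :
    ∃ Q : Matrix (Fin n) (Fin n) ℂ, Qᴴ * Q = 1 ∧
      ∀ p q : Fin n, q < p → (Qᴴ * M) p q = 0 := by
  have h : Module.finrank ℂ (EuclideanSpace ℂ (Fin n)) = Fintype.card (Fin n) := by simp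
  let f : Fin n → EuclideanSpace ℂ (Fin n) := fun j => WithLp.toLp 2 (fun i => M i j)
  haveI : WellFoundedLT (Fin n) := inferInstance
  let b : OrthonormalBasis (Fin n) ℂ (EuclideanSpace ℂ (Fin n)) :=
    InnerProductSpace.gramSchmidtOrthonormalBasis (𝕜 := ℂ) (ι := Fin n) h f
  refine ⟨Matrix.of (fun i p => b p i), ?_, ?_⟩
  · ext p q
    have horth := b.orthonormal
    rw [orthonormal_iff_ite] at horth
    have := horth p q
    simp only [PiLp.inner_apply, RCLike.inner_apply] at this
    simp [Matrix.mul_apply, Matrix.conjTranspose_apply, Matrix.one_apply, ← this, mul_comm]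
  · intro p q hqp
    have := InnerProductSpace.gramSchmidtOrthonormalBasis_inv_triangular h f hqp
    simp only [PiLp.inner_apply, RCLike.inner_apply] at this
    simpa [Matrix.mul_apply, Matrix.conjTranspose_apply, f, b, mul_comm] using this

noncomputable def useq (n : ℕ) (A' : ℕ → Matrix (Fin n) (Fin n) ℂ) :
    ℕ → Matrix (Fin n) (Fin n) ℂ
  | 0 => 1
  | (i + 1) => (qr_exists n (A' i * useq n A' i)).choose

lemma useq_unitary (n : ℕ) (A' : ℕ → Matrix (Fin n) (Fin n) ℂ) (j : ℕ) :
    (useq n A' j)ᴴ * useq n A' j = 1 := by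
  cases j with
  | zero => simp [useq]
  | succ i => exact (qr_exists n (A' i * useq n A' i)).choose_spec.1

lemma useq_tri (n : ℕ) (A' : ℕ → Matrix (Fin n) (Fin n) ℂ) (i : ℕ) (p q : Fin n) (hqp : q < p) :
    ((useq n A' (i + 1))ᴴ * A' i * useq n A' i) p q = 0 := by
  have := (qr_exists n (A' i * useq n A' i)).choose_spec.2 p q hqp
  rw [show useq n A' (i + 1) = (qr_exists n (A' i * useq n A' i)).choose from rfl,
    mul_assoc]
  exact this

/-- Path-graph instance of the simultaneous unitary triangularization theorem:
for matrices `A 0, …, A (k-1)` along a path there are unitary matrices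
`U 0, …, U k` such that each `(U (i+1))ᴴ * A i * U i` is upper triangular. -/
theorem complex_path_schur (n k : ℕ) (hk : 1 ≤ k)
    (A : Fin k → Matrix (Fin n) (Fin n) ℂ) :
    ∃ U : Fin (k + 1) → Matrix (Fin n) (Fin n) ℂ,
      (∀ i, (U i)ᴴ * U i = 1) ∧
      ∀ i : Fin k, ∀ p q : Fin n, q < p →
        ((U i.succ)ᴴ * A i * U i.castSucc) p q = 0 := by
  let A' : ℕ → Matrix (Fin n) (Fin n) ℂ := fun i =>
    if h : i < k then A ⟨i, h⟩ else 1
  refine ⟨fun j => useq n A' j.val, fun j => useq_unitary n A' j.val, ?_⟩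
  intro i p q hqp
  have := useq_tri n A' i.val p q hqp
  have hA : A' i.val = A i := by simp [A', i.isLt]
  simpa [Fin.val_succ, Fin.coe_castSucc, hA] using this
end

section
/- For every pair of complex n×n matrices A and B there exist unitary n×n matrices U and V such that Uᴴ A U and Vᴴ B U are both upper triangular. -/
open Matrix

namespace SchurAux

variable {n m : ℕ}

/-- Extend an `n×n` matrix to `(n+1)×(n+1)` with a `1` in the top-left corner. -/
def lift (M : Matrix (Fin n) (Fin n) ℂ) : Matrix (Fin (n+1)) (Fin (n+1)) ℂ :=
  Matrix.of (Fin.cons (Fin.cons 1 0) (fun i => Fin.cons 0 (M i)))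

@[simp] lemma lift_zero_zero (M : Matrix (Fin n) (Fin n) ℂ) : lift M 0 0 = 1 := rfl
@[simp] lemma lift_zero_succ (M : Matrix (Fin n) (Fin n) ℂ) (j : Fin n) :
    lift M 0 j.succ = 0 := rfl
@[simp] lemma lift_succ_zero (M : Matrix (Fin n) (Fin n) ℂ) (i : Fin n) :
    lift M i.succ 0 = 0 := by simp [lift]
@[simp] lemma lift_succ_succ (M : Matrix (Fin n) (Fin n) ℂ) (i j : Fin n) :
    lift M i.succ j.succ = M i j := by simp [lift]

lemma lift_conjTranspose (M : Matrix (Fin n) (Fin n) ℂ) : (lift M)ᴴ = lift Mᴴ := by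
  ext i j
  refine Fin.cases ?_ (fun i => ?_) i <;> refine Fin.cases ?_ (fun j => ?_) j <;>
    simp [conjTranspose_apply]

lemma lift_mul (M N : Matrix (Fin n) (Fin n) ℂ) : lift M * lift N = lift (M * N) := by
  ext i j
  refine Fin.cases ?_ (fun i => ?_) i <;> refine Fin.cases ?_ (fun j => ?_) j <;>
    simp [mul_apply, Fin.sum_univ_succ]

lemma lift_one : lift (1 : Matrix (Fin n) (Fin n) ℂ) = 1 := by
  ext i j
  refine Fin.cases ?_ (fun i => ?_) i <;> refine Fin.cases ?_ (fun j => ?_) j <;>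
    simp [Matrix.one_apply, Fin.succ_ne_zero, (Fin.succ_ne_zero _).symm, Fin.succ_inj]

lemma step_col (P : Matrix (Fin (n+1)) (Fin (n+1)) ℂ) (W U : Matrix (Fin n) (Fin n) ℂ)
    (hP : ∀ k : Fin n, P k.succ 0 = 0) (i : Fin n) :
    ((lift W)ᴴ * P * lift U) i.succ 0 = 0 := by
  rw [lift_conjTranspose]
  simp [Matrix.mul_apply, Fin.sum_univ_succ, hP]

lemma step_succ (P : Matrix (Fin (n+1)) (Fin (n+1)) ℂ) (W U : Matrix (Fin n) (Fin n) ℂ)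
    (i j : Fin n) :
    ((lift W)ᴴ * P * lift U) i.succ j.succ
      = (Wᴴ * P.submatrix Fin.succ Fin.succ * U) i j := by
  rw [lift_conjTranspose]
  simp [Matrix.mul_apply, Fin.sum_univ_succ, conjTranspose_apply]

/-- Matrix whose columns are the vectors of an orthonormal basis. -/
noncomputable def colMat (b : OrthonormalBasis (Fin m) ℂ (EuclideanSpace ℂ (Fin m))) :
    Matrix (Fin m) (Fin m) ℂ :=
  Matrix.of fun i j => b j i

lemma inner_sum (b : OrthonormalBasis (Fin m) ℂ (EuclideanSpace ℂ (Fin m))) (i j : Fin m) :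
    ∑ k, (starRingEnd ℂ) (b i k) * b j k = if i = j then 1 else 0 := by
  have h := b.orthonormal
  rw [orthonormal_iff_ite] at h
  have := h i j
  rw [PiLp.inner_apply] at this
  simpa [RCLike.inner_apply, mul_comm] using this

lemma colMat_unitary (b : OrthonormalBasis (Fin m) ℂ (EuclideanSpace ℂ (Fin m))) :
    (colMat b)ᴴ * colMat b = 1 := by
  ext i j
  rw [Matrix.mul_apply, Matrix.one_apply]
  simpa [colMat, conjTranspose_apply] using inner_sum b i j

lemma col_zero (b c : OrthonormalBasis (Fin m) ℂ (EuclideanSpace ℂ (Fin m)))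
    (M : Matrix (Fin m) (Fin m) ℂ) (d : ℂ) (i0 : Fin m)
    (h : ∀ k, M.mulVec (b i0) k = d * c i0 k) (i : Fin m) (hi : i ≠ i0) :
    ((colMat c)ᴴ * M * colMat b) i i0 = 0 := by
  have hmv : ∀ k, ∑ q, M k q * b i0 q = d * c i0 k := fun k => by
    rw [← h k]; rfl
  have key : ((colMat c)ᴴ * M * colMat b) i i0
      = d * ∑ k, (starRingEnd ℂ) (c i k) * c i0 k := by
    rw [Matrix.mul_apply]
    simp only [Matrix.mul_apply, conjTranspose_apply, colMat, Matrix.of_apply,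
      Finset.sum_mul]
    rw [Finset.sum_comm]
    simp only [mul_assoc, ← Finset.mul_sum, ← starRingEnd_apply]
    rw [Finset.mul_sum]
    exact Finset.sum_congr rfl fun k _ => by rw [hmv k]; ring
  rw [key, inner_sum, if_neg hi, mul_zero]

/-- Any unit vector is the first vector of some orthonormal basis. -/
lemma exists_basis_eq (x : EuclideanSpace ℂ (Fin (m+1))) (hx : ‖x‖ = 1) :
    ∃ b : OrthonormalBasis (Fin (m+1)) ℂ (EuclideanSpace ℂ (Fin (m+1))), b 0 = x := by
  have hv : Orthonormal ℂ (({0} : Set (Fin (m+1))).restrict fun _ => x) :=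
    ⟨fun i => hx, fun i j hij => absurd (Subsingleton.elim i j) hij⟩
  obtain ⟨b, hb⟩ := hv.exists_orthonormalBasis_extension_of_card_eq (by simp)
  exact ⟨b, hb 0 rfl⟩

lemma exists_basis_scalar (w : EuclideanSpace ℂ (Fin (m+1))) :
    ∃ (c : OrthonormalBasis (Fin (m+1)) ℂ (EuclideanSpace ℂ (Fin (m+1)))) (d : ℂ),
      ∀ k, w k = d * c 0 k := by
  by_cases hw : w = 0
  · obtain ⟨c, -⟩ := exists_basis_eq (EuclideanSpace.single 0 1) (by simp)
    exact ⟨c, 0, fun k => by simp [hw]⟩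
  · have hne : ‖w‖ ≠ 0 := norm_ne_zero_iff.mpr hw
    obtain ⟨c, hc⟩ := exists_basis_eq ((‖w‖ : ℂ)⁻¹ • w) (by simp [norm_smul, hne])
    refine ⟨c, (‖w‖ : ℂ), fun k => ?_⟩
    rw [hc]
    have : ((‖w‖ : ℂ)⁻¹ • w) k = (‖w‖ : ℂ)⁻¹ * w k := rfl
    rw [this]
    have h0 : (‖w‖ : ℂ) ≠ 0 := by exact_mod_cast hne
    field_simp

lemma exists_unit_eigenvector (A : Matrix (Fin (m+1)) (Fin (m+1)) ℂ) :
    ∃ (e : EuclideanSpace ℂ (Fin (m+1))) (μ : ℂ), ‖e‖ = 1 ∧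
      ∀ k, A.mulVec e k = μ * e k := by
  obtain ⟨μ, hμ⟩ := Module.End.exists_eigenvalue (Matrix.mulVecLin A)
  obtain ⟨u, hu⟩ := hμ.exists_hasEigenvector
  have hu0 : u ≠ 0 := hu.right
  have hAu : ∀ k, (A.mulVec u) k = μ * u k := by
    intro k
    have := congrFun hu.apply_eq_smul k
    simpa [Matrix.mulVecLin_apply] using this
  set u' : EuclideanSpace ℂ (Fin (m+1)) := WithLp.toLp 2 u with hu'
  have hne : ‖u'‖ ≠ 0 := norm_ne_zero_iff.mpr (fun h => hu0 (by
    have := congrArg WithLp.ofLp h; simpa [hu'] using this))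
  refine ⟨(‖u'‖ : ℂ)⁻¹ • u', μ, by simp [norm_smul, hne], fun k => ?_⟩
  have hk : ∑ q, A k q * u q = μ * u k := by
    have := hAu k
    simpa [Matrix.mulVec, dotProduct] using this
  show ∑ q, A k q * ((‖u'‖ : ℂ)⁻¹ • u') q = μ * ((‖u'‖ : ℂ)⁻¹ • u') k
  have hs : ∀ q, ((‖u'‖ : ℂ)⁻¹ • u') q = (‖u'‖ : ℂ)⁻¹ * u q := fun q => rfl
  simp only [hs]
  calc ∑ q, A k q * ((‖u'‖ : ℂ)⁻¹ * u q)
      = (‖u'‖ : ℂ)⁻¹ * ∑ q, A k q * u q := by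
        rw [Finset.mul_sum]; exact Finset.sum_congr rfl fun q _ => by ring
    _ = (‖u'‖ : ℂ)⁻¹ * (μ * u k) := by rw [hk]
    _ = μ * ((‖u'‖ : ℂ)⁻¹ * u k) := by ring

end SchurAux

open SchurAux

/-- Pseudotree with one loop (carrying `A`) and one pendant edge (carrying `B`):
simultaneous unitary upper-triangularization. -/
theorem complex_loop_plus_edge_schur (n : ℕ) (A B : Matrix (Fin n) (Fin n) ℂ) :
    ∃ U V : Matrix (Fin n) (Fin n) ℂ, Uᴴ * U = 1 ∧ Vᴴ * V = 1 ∧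
      (∀ i j : Fin n, j < i → (Uᴴ * A * U) i j = 0) ∧
      (∀ i j : Fin n, j < i → (Vᴴ * B * U) i j = 0) := by
  induction n with
  | zero => exact ⟨1, 1, by simp, by simp, fun i => i.elim0, fun i => i.elim0⟩
  | succ n ih =>
    obtain ⟨e, μ, he, hAe⟩ := exists_unit_eigenvector A
    obtain ⟨b, hb0⟩ := exists_basis_eq e he
    obtain ⟨c, d, hcd⟩ := exists_basis_scalar (WithLp.toLp 2 (B.mulVec e))
    have hA : ∀ k, A.mulVec (b 0) k = μ * b 0 k := by rw [hb0]; exact hAe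
    have hB : ∀ k, B.mulVec (b 0) k = d * c 0 k := by rw [hb0]; exact hcd
    set U₁ := colMat b with hU₁
    set V₁ := colMat c with hV₁
    set P := U₁ᴴ * A * U₁ with hP
    set Q := V₁ᴴ * B * U₁ with hQ
    have hPcol : ∀ k : Fin n, P k.succ 0 = 0 := fun k =>
      col_zero b b A μ 0 hA k.succ (Fin.succ_ne_zero k)
    have hQcol : ∀ k : Fin n, Q k.succ 0 = 0 := fun k =>
      col_zero b c B d 0 hB k.succ (Fin.succ_ne_zero k)
    obtain ⟨U₂, V₂, hU₂, hV₂, hT₁, hT₂⟩ :=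
      ih (P.submatrix Fin.succ Fin.succ) (Q.submatrix Fin.succ Fin.succ)
    refine ⟨U₁ * lift U₂, V₁ * lift V₂, ?_, ?_, ?_, ?_⟩
    · rw [conjTranspose_mul, Matrix.mul_assoc, ← Matrix.mul_assoc U₁ᴴ U₁,
        colMat_unitary b, Matrix.one_mul, lift_conjTranspose, lift_mul, hU₂, lift_one]
    · rw [conjTranspose_mul, Matrix.mul_assoc, ← Matrix.mul_assoc V₁ᴴ V₁,
        colMat_unitary c, Matrix.one_mul, lift_conjTranspose, lift_mul, hV₂, lift_one]
    · have hE : (U₁ * lift U₂)ᴴ * A * (U₁ * lift U₂)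
          = (lift U₂)ᴴ * P * lift U₂ := by
        rw [hP]; simp only [conjTranspose_mul, Matrix.mul_assoc]
      rw [hE]
      intro i j hij
      refine Fin.cases (fun h => absurd h (Fin.not_lt_zero j).elim) (fun i' hij => ?_) i hij
      refine Fin.cases (fun _ => step_col P U₂ U₂ hPcol i') (fun j' hij => ?_) j hij
      rw [step_succ]
      exact hT₁ i' j' (by exact_mod_cast Fin.succ_lt_succ_iff.mp hij)
    · have hE : (V₁ * lift V₂)ᴴ * B * (U₁ * lift U₂)
          = (lift V₂)ᴴ * Q * lift U₂ := by
        rw [hQ]; simp only [conjTranspose_mul, Matrix.mul_assoc]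
      rw [hE]
      intro i j hij
      refine Fin.cases (fun h => absurd h (Fin.not_lt_zero j).elim) (fun i' hij => ?_) i hij
      refine Fin.cases (fun _ => step_col Q V₂ U₂ hQcol i') (fun j' hij => ?_) j hij
      rw [step_succ]
      exact hT₂ i' j' (by exact_mod_cast Fin.succ_lt_succ_iff.mp hij)
end

section
/- For every pair of real n×n matrices A and B there exist real orthogonal n×n matrices Q and P such that Qᵀ A Q is quasi-upper-triangular and Pᵀ B Q is upper triangular. -/
open Matrix

open Module Polynomial Submodule

section Aux
variable {V : Type} [AddCommGroup V] [Module ℝ V] [FiniteDimensional ℝ V]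

omit [FiniteDimensional ℝ V] in
lemma finrank_span_singleton_le (v : V) : finrank ℝ (span ℝ ({v} : Set V)) ≤ 1 := by
  by_cases h : v = 0
  · subst h
    rw [Submodule.span_zero_singleton]
    simp
  · exact le_of_eq (finrank_span_singleton h)

lemma finrank_sup_le (s t : Submodule ℝ V) :
    finrank ℝ ↥(s ⊔ t) ≤ finrank ℝ s + finrank ℝ t := by
  have := Submodule.finrank_sup_add_finrank_inf_eq s t
  omega

/-- Every endomorphism of a nonzero finite-dimensional real vector space has an
invariant subspace of dimension 1 or 2. -/
lemma exists_invariant_dim12 (hV : 0 < finrank ℝ V) (f : V →ₗ[ℝ] V) :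
    ∃ U : Submodule ℝ V, Submodule.map f U ≤ U ∧
      (finrank ℝ U = 1 ∨ finrank ℝ U = 2) := by
  have : Nontrivial V := Module.nontrivial_of_finrank_pos hV
  have hint : IsIntegral ℝ f := (Module.End.isIntegral (R := ℝ) (M := V)).isIntegral f
  have hmin_ne : minpoly ℝ f ≠ 0 := minpoly.ne_zero hint
  obtain ⟨p, hp_irr, q, hq⟩ :=
    WfDvdMonoid.exists_irreducible_factor (minpoly.not_isUnit ℝ f) hmin_ne
  have hpdeg : 0 < p.natDegree := hp_irr.natDegree_pos
  -- the kernel of p(f) is nonzero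
  have hker : LinearMap.ker (aeval f p) ≠ ⊥ := by
    intro hbot
    have hinj : Function.Injective (aeval f p) := LinearMap.ker_eq_bot.mp hbot
    have hq_ne : q ≠ 0 := by rintro rfl; simp at hq; exact hmin_ne hq
    have h0 : aeval f p * aeval f q = 0 := by
      rw [← _root_.map_mul, ← hq, minpoly.aeval]
    have hq0 : aeval f q = 0 := by
      ext x
      have h1 : aeval f p (aeval f q x) = 0 := by
        have := congrFun (congrArg DFunLike.coe h0) x
        simpa [Module.End.mul_apply] using this
      have h2 : aeval f p (aeval f q x) = aeval f p 0 := by simp [h1]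
      simpa using hinj h2
    have hle := minpoly.degree_le_of_ne_zero ℝ f hq_ne hq0
    have h2 := natDegree_le_natDegree hle
    rw [hq, natDegree_mul hp_irr.ne_zero hq_ne] at h2
    omega
  obtain ⟨v, hv_mem, hv_ne⟩ := (Submodule.ne_bot_iff _).mp hker
  set U : Submodule ℝ V := span ℝ ({v, f v} : Set V) with hU
  have hvU : v ∈ U := subset_span (by simp)
  have hfvU : f v ∈ U := subset_span (by simp)
  have hdeg2 : p.natDegree ≤ 2 := hp_irr.natDegree_le_two
  -- the basic relation
  have hrel : p.coeff 0 • v + p.coeff 1 • f v + p.coeff 2 • f (f v) = 0 := by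
    have hav : aeval f p v = 0 := LinearMap.mem_ker.mp hv_mem
    have h3 : (aeval f p : V →ₗ[ℝ] V) =
        ∑ i ∈ Finset.range 3, p.coeff i • (f ^ i : V →ₗ[ℝ] V) :=
      aeval_eq_sum_range' (p := p) (n := 3) (by omega) f
    have := congrFun (congrArg DFunLike.coe h3) v
    rw [hav] at this
    simp only [Finset.sum_range_succ, Finset.sum_range_zero, zero_add,
      LinearMap.add_apply, LinearMap.smul_apply, Module.End.pow_apply] at this
    simpa [Function.iterate_succ, pow_succ, Module.End.mul_apply] using this.symm
  have hffv : f (f v) ∈ U := by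
    by_cases hc2 : p.coeff 2 = 0
    · -- degree 1 case
      have hd1 : p.natDegree = 1 := by
        rcases Nat.lt_or_ge p.natDegree 2 with h | h
        · omega
        · have h2 : p.natDegree = 2 := by omega
          exfalso
          exact leadingCoeff_ne_zero.mpr hp_irr.ne_zero (by rwa [leadingCoeff, h2])
      have hc1 : p.coeff 1 ≠ 0 := by
        have := leadingCoeff_ne_zero.mpr hp_irr.ne_zero
        rwa [leadingCoeff, hd1] at this
      have hfv : f v = (-(p.coeff 1)⁻¹ * p.coeff 0) • v := by
        rw [hc2] at hrel
        have : p.coeff 1 • f v = -(p.coeff 0 • v) := by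
          rw [eq_neg_iff_add_eq_zero]
          linear_combination (norm := module) hrel
        have := congrArg (fun x => (p.coeff 1)⁻¹ • x) this
        simp only [smul_smul, inv_mul_cancel₀ hc1, one_smul, smul_neg] at this
        rw [this]
        module
      rw [hfv, _root_.map_smul]
      exact smul_mem _ _ hfvU
    · have : f (f v) = (-(p.coeff 2)⁻¹ * p.coeff 1) • f v +
          (-(p.coeff 2)⁻¹ * p.coeff 0) • v := by
        have : p.coeff 2 • f (f v) = -(p.coeff 0 • v) - p.coeff 1 • f v := by
          linear_combination (norm := module) hrel
        have := congrArg (fun x => (p.coeff 2)⁻¹ • x) this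
        simp only [smul_smul, inv_mul_cancel₀ hc2, one_smul] at this
        rw [this]
        module
      rw [this]
      exact add_mem (smul_mem _ _ hfvU) (smul_mem _ _ hvU)
  refine ⟨U, ?_, ?_⟩
  · rw [hU, Submodule.map_span, span_le]
    rintro x ⟨y, hy, rfl⟩
    simp only [Set.mem_insert_iff, Set.mem_singleton_iff] at hy
    rcases hy with rfl | rfl
    · exact hfvU
    · exact hffv
  · have h1 : 1 ≤ finrank ℝ U := by
      have := finrank_span_singleton hv_ne (K := ℝ)
      have hle : span ℝ ({v} : Set V) ≤ U := span_mono (by simp)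
      have := Submodule.finrank_mono hle
      omega
    have h2 : finrank ℝ U ≤ 2 := by
      have : U = span ℝ ({v} : Set V) ⊔ span ℝ ({f v} : Set V) := by
        rw [hU, Set.insert_eq, Submodule.span_union]
      rw [this]
      have := finrank_sup_le (span ℝ ({v} : Set V)) (span ℝ ({f v} : Set V))
      have a1 := finrank_span_singleton_le v
      have a2 := finrank_span_singleton_le (f v)
      omega
    omega

end Aux
section Flag
variable {V : Type} [AddCommGroup V] [Module ℝ V] [FiniteDimensional ℝ V]

lemma finrank_comap_mkQ (N : Submodule ℝ V) (S : Submodule ℝ (V ⧸ N)) :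
    finrank ℝ (Submodule.comap N.mkQ S) = finrank ℝ S + finrank ℝ N := by
  set X := Submodule.comap N.mkQ S with hX
  have hNX : N ≤ X := by
    intro x hx
    simp only [hX, Submodule.mem_comap, Submodule.mkQ_apply]
    rw [Submodule.Quotient.mk_eq_zero _ |>.mpr hx]
    exact S.zero_mem
  let g0 : (↥X) →ₗ[ℝ] V ⧸ N := N.mkQ ∘ₗ X.subtype
  have hrange : LinearMap.range g0 = S := by
    rw [LinearMap.range_comp, Submodule.range_subtype]
    exact Submodule.map_comap_eq_of_surjective (N.mkQ_surjective) S
  have hker : LinearMap.ker g0 = Submodule.comap X.subtype N := by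
    rw [LinearMap.ker_comp, Submodule.ker_mkQ]
  have h1 := LinearMap.finrank_range_add_finrank_ker g0
  rw [hrange, hker] at h1
  have h2 : finrank ℝ (Submodule.comap X.subtype N) = finrank ℝ N :=
    (Submodule.comapSubtypeEquivOfLe hNX).finrank_eq
  rw [h2] at h1
  omega

omit [FiniteDimensional ℝ V] in
lemma comap_mkQ_invariant (N : Submodule ℝ V) (f : V →ₗ[ℝ] V)
    (hN : N ≤ Submodule.comap f N) (S : Submodule ℝ (V ⧸ N))
    (hS : Submodule.map (Submodule.mapQ N N f hN) S ≤ S) :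
    Submodule.map f (Submodule.comap N.mkQ S) ≤ Submodule.comap N.mkQ S := by
  rintro _ ⟨v, hv, rfl⟩
  simp only [Submodule.mem_comap, Submodule.mkQ_apply] at hv ⊢
  have : (Submodule.Quotient.mk (f v) : V ⧸ N) =
      (Submodule.mapQ N N f hN) (Submodule.Quotient.mk v) :=
    (Submodule.mapQ_apply N N f v).symm
  rw [this]
  exact hS ⟨_, hv, rfl⟩

lemma exists_flag : ∀ (n : ℕ) (V : Type) [AddCommGroup V] [Module ℝ V]
    [FiniteDimensional ℝ V], finrank ℝ V = n → ∀ f : V →ₗ[ℝ] V,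
    ∃ W : ℕ → Submodule ℝ V, Monotone W ∧ (∀ j, finrank ℝ (W j) = min j n) ∧
      ∀ j, Submodule.map f (W j) ≤ W j ∨ Submodule.map f (W (j+1)) ≤ W (j+1) := by
  intro n
  induction n using Nat.strong_induction_on with
  | _ n IH =>
    intro V _ _ _ hn f
    rcases Nat.eq_zero_or_pos n with h0 | hpos
    · subst h0
      refine ⟨fun _ => ⊥, monotone_const, fun j => by simp, fun j => Or.inl (by simp)⟩
    · obtain ⟨U, hUinv, hUd⟩ := exists_invariant_dim12 (by omega) f
      set d := finrank ℝ U with hd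
      have hd12 : d = 1 ∨ d = 2 := hUd
      have hdn : d ≤ n := hn ▸ Submodule.finrank_le U
      have hUle : U ≤ Submodule.comap f U := Submodule.map_le_iff_le_comap.mp hUinv
      let g : (V ⧸ U) →ₗ[ℝ] (V ⧸ U) := Submodule.mapQ U U f hUle
      have hqrank : finrank ℝ (V ⧸ U) = n - d := by
        have := Submodule.finrank_quotient_add_finrank U
        omega
      have hlt : n - d < n := by omega
      obtain ⟨W', hW'mono, hW'rank, hW'inv⟩ := IH (n - d) hlt (V ⧸ U) hqrank g
      have hW'0 : W' 0 = ⊥ := by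
        have := hW'rank 0
        simp only [Nat.zero_min] at this
        exact Submodule.finrank_eq_zero.mp (by omega)
      have hcomap0 : Submodule.comap U.mkQ (W' 0) = U := by
        rw [hW'0, Submodule.comap_bot, Submodule.ker_mkQ]
      -- a line inside U, used only when d = 2
      obtain ⟨v, hvU, hvne⟩ : ∃ v, v ∈ U ∧ v ≠ 0 := by
        have : U ≠ ⊥ := by
          intro h
          rw [h] at hd
          simp at hd
          omega
        obtain ⟨v, h1, h2⟩ := (Submodule.ne_bot_iff _).mp this
        exact ⟨v, h1, h2⟩
      set L : Submodule ℝ V := Submodule.span ℝ {v} with hL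
      have hLU : L ≤ U := by
        rw [hL, Submodule.span_le]
        simpa using hvU
      have hLrank : finrank ℝ L = 1 := finrank_span_singleton hvne
      refine ⟨fun j => if j < d then (if j = 0 then ⊥ else L)
        else Submodule.comap U.mkQ (W' (j - d)), ?_, ?_, ?_⟩
      · apply monotone_nat_of_le_succ
        intro j
        by_cases h2 : j < d
        · rw [if_pos h2]
          by_cases h1 : j + 1 < d
          · have hj0 : j = 0 := by omega
            rw [if_pos h1, if_pos hj0]
            exact bot_le
          · rw [if_neg h1, show j + 1 - d = 0 from by omega, hcomap0]
            split
            · exact bot_le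
            · exact hLU
        · rw [if_neg h2, if_neg (show ¬ j + 1 < d by omega)]
          exact Submodule.comap_mono (hW'mono (by omega))
      · intro j
        beta_reduce
        by_cases h2 : j < d
        · rw [if_pos h2]
          by_cases hj0 : j = 0
          · rw [if_pos hj0]
            simp [hj0]
          · have hh : j = 1 ∧ d = 2 := by omega
            rw [if_neg hj0, hLrank]
            omega
        · rw [if_neg h2, finrank_comap_mkQ, hW'rank]
          omega
      · intro j
        beta_reduce
        by_cases h2 : j + 1 < d
        · left
          have hj0 : j = 0 := by omega
          rw [if_pos (show j < d by omega), if_pos hj0]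
          simp
        · by_cases h3 : j < d
          · right
            rw [if_neg h2, show j + 1 - d = 0 from by omega, hcomap0]
            exact hUinv
          · rcases hW'inv (j - d) with h | h
            · left
              rw [if_neg h3]
              exact comap_mkQ_invariant U f hUle _ h
            · right
              rw [if_neg (show ¬ j + 1 < d by omega),
                show j + 1 - d = (j - d) + 1 from by omega]
              exact comap_mkQ_invariant U f hUle _ h
end Flag
section Euclid
variable {n : ℕ}

local notation "E" n => EuclideanSpace ℝ (Fin n)

lemma exists_adapted (n : ℕ) (W : ℕ → Submodule ℝ (E n))
    (hmono : Monotone W) (hrank : ∀ j, finrank ℝ (W j) = min j n) :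
    ∃ q : Fin n → E n,
      (∀ j : Fin n, q j ∈ W ((j : ℕ) + 1)) ∧ (∀ j : Fin n, q j ∈ (W (j : ℕ))ᗮ) ∧
      (∀ j, ‖q j‖ = 1) := by
  have key : ∀ j : Fin n, ∃ v : E n,
      v ∈ W ((j : ℕ) + 1) ∧ v ∈ (W (j : ℕ))ᗮ ∧ ‖v‖ = 1 := by
    intro j
    have hle : W (j : ℕ) ≤ W ((j : ℕ) + 1) := hmono (Nat.le_succ _)
    have hr : finrank ℝ ((W (j : ℕ))ᗮ ⊓ W ((j : ℕ) + 1) : Submodule ℝ (E n)) = 1 := by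
      apply Submodule.finrank_add_inf_finrank_orthogonal' hle
      rw [hrank, hrank]
      have := j.isLt
      omega
    have hne : ((W (j : ℕ))ᗮ ⊓ W ((j : ℕ) + 1) : Submodule ℝ (E n)) ≠ ⊥ := by
      intro h
      rw [h] at hr
      simp at hr
    obtain ⟨v, hv, hvne⟩ := (Submodule.ne_bot_iff _).mp hne
    obtain ⟨hv1, hv2⟩ := Submodule.mem_inf.mp hv
    have hnv : ‖v‖ ≠ 0 := norm_ne_zero_iff.mpr hvne
    refine ⟨‖v‖⁻¹ • v, Submodule.smul_mem _ _ hv2, Submodule.smul_mem _ _ hv1, ?_⟩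
    rw [norm_smul, norm_inv, norm_norm]
    exact inv_mul_cancel₀ hnv
  choose q h1 h2 h3 using key
  exact ⟨q, h1, h2, h3⟩

/-- matrix whose columns are the vectors `q j` -/
def colMat (q : Fin n → E n) : Matrix (Fin n) (Fin n) ℝ :=
  Matrix.of fun k j => q j k

lemma colMat_mul_self (q : Fin n → E n) (i j : Fin n) :
    ((colMat q)ᵀ * colMat q) i j = inner ℝ (q i) (q j) := by
  simp only [colMat, Matrix.mul_apply, Matrix.transpose_apply, Matrix.of_apply,
    PiLp.inner_apply, RCLike.inner_apply', starRingEnd_apply, star_trivial]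

lemma toEuclideanLin_apply' (M : Matrix (Fin n) (Fin n) ℝ) (x : E n) (k : Fin n) :
    (Matrix.toEuclideanLin M x) k = ∑ l, M k l * x l := by
  rw [Matrix.toEuclideanLin_apply]
  rw [PiLp.toLp_apply]
  simp [Matrix.mulVec, dotProduct]

lemma entry_eq_inner (M : Matrix (Fin n) (Fin n) ℝ) (r s : Fin n → E n) (i j : Fin n) :
    ((colMat r)ᵀ * M * colMat s) i j = inner ℝ (r i) (Matrix.toEuclideanLin M (s j)) := by
  simp only [PiLp.inner_apply, RCLike.inner_apply, starRingEnd_apply, star_trivial,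
    toEuclideanLin_apply', colMat, Matrix.mul_apply, Matrix.transpose_apply, Matrix.of_apply]
  simp only [Finset.sum_mul, Finset.mul_sum]
  rw [Finset.sum_comm]
  exact Finset.sum_congr rfl fun k _ => Finset.sum_congr rfl fun l _ => by ring

lemma inner_zero_of_orth {K : Submodule ℝ (E n)} {x y : E n}
    (hx : x ∈ Kᗮ) (hy : y ∈ K) : (inner ℝ x y : ℝ) = 0 := by
  rw [real_inner_comm]
  exact hx y hy

lemma exists_superspace (n : ℕ) (X : Submodule ℝ (E n)) (k : ℕ)
    (h1 : finrank ℝ X ≤ k) (h2 : k ≤ n) : ∃ Y, X ≤ Y ∧ finrank ℝ Y = k := by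
  induction k with
  | zero => exact ⟨X, le_rfl, by omega⟩
  | succ k IHk =>
    rcases Nat.lt_or_ge k (finrank ℝ X) with h | h
    · exact ⟨X, le_rfl, by omega⟩
    · obtain ⟨Y, hXY, hY⟩ := IHk h (by omega)
      have hYtop : Y ≠ ⊤ := by
        intro htop
        rw [htop, finrank_top, finrank_euclideanSpace_fin] at hY
        omega
      obtain ⟨w, hw⟩ : ∃ w, w ∉ Y := by
        by_contra hc
        push_neg at hc
        exact hYtop (Submodule.eq_top_iff'.mpr hc)
      have hwne : w ≠ 0 := fun h => hw (h ▸ Y.zero_mem)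
      refine ⟨Y ⊔ Submodule.span ℝ {w}, le_trans hXY le_sup_left, ?_⟩
      have hdisj : Y ⊓ Submodule.span ℝ {w} = ⊥ :=
        ((Submodule.disjoint_span_singleton' hwne).mpr hw).eq_bot
      have hs := Submodule.finrank_sup_add_finrank_inf_eq Y (Submodule.span ℝ {w})
      rw [hdisj, finrank_span_singleton hwne, finrank_bot] at hs
      omega

lemma exists_containing_flag (n : ℕ) (u : Fin n → E n) :
    ∃ Y : ℕ → Submodule ℝ (E n), Monotone Y ∧
      (∀ m, finrank ℝ (Y m) = min m n) ∧ ∀ j : Fin n, u j ∈ Y ((j : ℕ) + 1) := by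
  classical
  have step : ∀ (S : Submodule ℝ (E n)) (m : ℕ),
      ∃ T, S ≤ T ∧ (finrank ℝ S = min m n →
        finrank ℝ T = min (m + 1) n ∧ ∀ hm : m < n, u ⟨m, hm⟩ ∈ T) := by
    intro S m
    by_cases h : finrank ℝ S = min m n
    · by_cases hm : m < n
      · have hXr : finrank ℝ ↥(S ⊔ Submodule.span ℝ {u ⟨m, hm⟩}) ≤ m + 1 := by
          have h1 := finrank_sup_le S (Submodule.span ℝ {u ⟨m, hm⟩})
          have h2 := finrank_span_singleton_le (u ⟨m, hm⟩)
          omega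
        obtain ⟨T, hT1, hT2⟩ := exists_superspace n _ (m + 1) hXr (by omega)
        refine ⟨T, le_trans le_sup_left hT1, fun _ => ⟨by omega, fun hm' => ?_⟩⟩
        exact hT1 (Submodule.mem_sup_right (Submodule.mem_span_singleton_self _))
      · exact ⟨S, le_rfl, fun h' => ⟨by omega, fun hm' => absurd hm' hm⟩⟩
    · exact ⟨S, le_rfl, fun h' => absurd h' h⟩
  let Y : ℕ → Submodule ℝ (E n) :=
    fun m => Nat.rec (motive := fun _ => Submodule ℝ (E n)) ⊥ (fun m S => Classical.choose (step S m)) m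
  have hY0 : Y 0 = ⊥ := rfl
  have hYs : ∀ m, Y (m + 1) = Classical.choose (step (Y m) m) := fun m => rfl
  have hle : ∀ m, Y m ≤ Y (m + 1) := by
    intro m
    rw [hYs]
    exact (Classical.choose_spec (step (Y m) m)).1
  have hrk : ∀ m, finrank ℝ ↥(Y m) = min m n := by
    intro m
    induction m with
    | zero => rw [hY0]; simp
    | succ m ih =>
      rw [hYs]
      exact ((Classical.choose_spec (step (Y m) m)).2 ih).1
  refine ⟨Y, monotone_nat_of_le_succ hle, hrk, ?_⟩
  intro j
  have := ((Classical.choose_spec (step (Y (j : ℕ)) (j : ℕ))).2 (hrk (j : ℕ))).2 j.isLt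
  rw [hYs]
  simpa using this

end Euclid
/-- Pseudotree with one loop (carrying `A`) and one pendant edge (carrying `B`):
simultaneous orthogonal (quasi-)upper-triangularization. -/
theorem real_loop_plus_edge_schur (n : ℕ) (A B : Matrix (Fin n) (Fin n) ℝ) :
    ∃ Q P : Matrix (Fin n) (Fin n) ℝ, Qᵀ * Q = 1 ∧ Pᵀ * P = 1 ∧
      QuasiUpperTriangular (Qᵀ * A * Q) ∧
      (∀ i j : Fin n, j < i → (Pᵀ * B * Q) i j = 0) := by
  classical
  have hE : finrank ℝ (EuclideanSpace ℝ (Fin n)) = n := finrank_euclideanSpace_fin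
  set fA := Matrix.toEuclideanLin A with hfA
  set fB := Matrix.toEuclideanLin B with hfB
  obtain ⟨W, hWmono, hWrank, hWinv⟩ := exists_flag n (EuclideanSpace ℝ (Fin n)) hE fA
  obtain ⟨q, hq1, hq2, hq3⟩ := exists_adapted n W hWmono hWrank
  have hWstep : ∀ j, Submodule.map fA (W j) ≤ W (j + 1) := by
    intro j
    rcases hWinv j with h | h
    · exact le_trans h (hWmono (Nat.le_succ j))
    · exact le_trans (Submodule.map_mono (hWmono (Nat.le_succ j))) h
  obtain ⟨Y, hYmono, hYrank, hYmem⟩ := exists_containing_flag n (fun j => fB (q j))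
  obtain ⟨p, hp1, hp2, hp3⟩ := exists_adapted n Y hYmono hYrank
  have key : ∀ (Z : ℕ → Submodule ℝ (EuclideanSpace ℝ (Fin n))), Monotone Z →
      ∀ r : Fin n → EuclideanSpace ℝ (Fin n),
      (∀ j : Fin n, r j ∈ Z ((j : ℕ) + 1)) → (∀ j : Fin n, r j ∈ (Z (j : ℕ))ᗮ) →
      (∀ j, ‖r j‖ = 1) → (colMat r)ᵀ * colMat r = 1 := by
    intro Z hZmono r h1 h2 h3
    ext i j
    rw [colMat_mul_self]
    rcases lt_trichotomy i j with h | h | h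
    · rw [Matrix.one_apply_ne (ne_of_lt h)]
      have hmem : r i ∈ Z (j : ℕ) := hZmono (by exact_mod_cast h) (h1 i)
      rw [real_inner_comm]
      exact inner_zero_of_orth (h2 j) hmem
    · subst h
      rw [Matrix.one_apply_eq]
      rw [real_inner_self_eq_norm_sq, h3 i]
      norm_num
    · rw [Matrix.one_apply_ne (ne_of_gt h)]
      have hmem : r j ∈ Z (i : ℕ) := hZmono (by exact_mod_cast h) (h1 j)
      exact inner_zero_of_orth (h2 i) hmem
  refine ⟨colMat q, colMat p, key W hWmono q hq1 hq2 hq3, key Y hYmono p hp1 hp2 hp3,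
    ⟨?_, ?_⟩, ?_⟩
  · intro i j hij
    rw [entry_eq_inner]
    have h1 : fA (q j) ∈ W ((j : ℕ) + 2) :=
      hWstep ((j : ℕ) + 1) ⟨q j, hq1 j, rfl⟩
    have h2 : fA (q j) ∈ W (i : ℕ) := hWmono (by omega) h1
    exact inner_zero_of_orth (hq2 i) h2
  · rintro ⟨i, h1, h2, hne1, hne2⟩
    have e1 : ¬ Submodule.map fA (W (i + 1)) ≤ W (i + 1) := by
      intro hmap
      apply hne1
      rw [entry_eq_inner]
      have hm : fA (q ⟨i, Nat.lt_of_succ_lt h1⟩) ∈ W (i + 1) := by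
        apply hmap
        exact ⟨q ⟨i, Nat.lt_of_succ_lt h1⟩, hq1 ⟨i, Nat.lt_of_succ_lt h1⟩, rfl⟩
      exact inner_zero_of_orth (hq2 ⟨i + 1, h1⟩) hm
    have e2 : ¬ Submodule.map fA (W (i + 2)) ≤ W (i + 2) := by
      intro hmap
      apply hne2
      rw [entry_eq_inner]
      have hm : fA (q ⟨i + 1, h1⟩) ∈ W (i + 2) := by
        apply hmap
        exact ⟨q ⟨i + 1, h1⟩, hq1 ⟨i + 1, h1⟩, rfl⟩
      exact inner_zero_of_orth (hq2 ⟨i + 2, h2⟩) hm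
    rcases hWinv (i + 1) with h | h
    · exact e1 h
    · exact e2 h
  · intro i j hij
    rw [entry_eq_inner]
    have h1 : fB (q j) ∈ Y (i : ℕ) := hYmono (by omega) (hYmem j)
    exact inner_zero_of_orth (hp2 i) h1
end
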